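/- arXiv:math/0610077 — 8 statements merged into one kernel-verified Lean document; each statement's English description precedes it below -/
import Mathlib

section
/- Let φ(z) = (Az+B)/(Cz+D) with A,B,C,D ∈ ℂ and AD−BC ≠ 0 be a linear-fractional map whose denominator Cz+D does not vanish on the closed unit disk, which maps 𝔻 into 𝔻 but not onto 𝔻, and suppose φ(ζ) = η for two distinct points ζ, η ∈ ∂𝔻. Let σ be the Krein adjoint of φ, and suppose b > 0 and c > 0 are real numbers such that ρ_{η,b}(𝔻) = φ(𝔻) and ρ_{ζ,c}(𝔻) = σ(𝔻) (equality of image sets). Then c = |φ'(ζ)|·b, and for every z ∈ 𝔻 one has φ(σ(z)) = ρ_{η,2b}(z) and σ(φ(z)) = ρ_{ζ,2c}(z). -/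
open Complex Metric

lemma ball_eq_ball_param {x y : ℂ} {r s : ℝ} (hr : 0 < r) (hs : 0 < s)
    (h : ball x r = ball y s) : x = y ∧ r = s := by
  have hcl : closedBall x r = closedBall y s := by
    rw [← closure_ball x hr.ne', ← closure_ball y hs.ne', h]
  have key : ∀ w : ℂ, dist w x ≤ r ↔ dist w y ≤ s := by
    intro w
    constructor
    · intro hw; have : w ∈ closedBall x r := by simpa [mem_closedBall] using hw
      rw [hcl] at this; simpa [mem_closedBall] using this
    · intro hw; have : w ∈ closedBall y s := by simpa [mem_closedBall] using hw
      rw [← hcl] at this; simpa [mem_closedBall] using this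
  have sqle : ∀ (w : ℂ) (q : ℝ), 0 ≤ q → ‖w‖ ≤ q →
      w.re^2 + w.im^2 ≤ q^2 := by
    intro w q hq hw
    have h2 : ‖w‖ ^ 2 ≤ q^2 := by nlinarith [norm_nonneg w]
    rw [Complex.sq_norm, Complex.normSq_apply] at h2
    nlinarith
  have dxr : ∀ (w : ℂ) (q : ℝ), 0 < q → dist (w + q) w ≤ q ∧ dist (w - q) w ≤ q := by
    intro w q hq
    constructor
    · have e : w + (q:ℂ) - w = (q:ℂ) := by ring
      rw [Complex.dist_eq, e, Complex.norm_real, Real.norm_eq_abs, abs_of_pos hq]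
    · have e : w - (q:ℂ) - w = -(q:ℂ) := by ring
      rw [Complex.dist_eq, e, norm_neg, Complex.norm_real, Real.norm_eq_abs, abs_of_pos hq]
  have h1 : ‖x + (r:ℂ) - y‖ ≤ s := by
    have h := (key (x + r)).mp (dxr x r hr).1
    rwa [Complex.dist_eq] at h
  have h2 : ‖x - (r:ℂ) - y‖ ≤ s := by
    have h := (key (x - r)).mp (dxr x r hr).2
    rwa [Complex.dist_eq] at h
  have h3 : ‖y + (s:ℂ) - x‖ ≤ r := by
    have h := (key (y + s)).mpr (dxr y s hs).1
    rwa [Complex.dist_eq] at h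
  have h4 : ‖y - (s:ℂ) - x‖ ≤ r := by
    have h := (key (y - s)).mpr (dxr y s hs).2
    rwa [Complex.dist_eq] at h
  have e1 := sqle _ s hs.le h1
  have e2 := sqle _ s hs.le h2
  have e3 := sqle _ r hr.le h3
  have e4 := sqle _ r hr.le h4
  simp only [Complex.add_re, Complex.sub_re, Complex.add_im, Complex.sub_im,
    Complex.ofReal_re, Complex.ofReal_im] at e1 e2 e3 e4
  have hre : x.re = y.re := by nlinarith
  have him : x.im = y.im := by nlinarith
  exact ⟨Complex.ext hre him, by nlinarith⟩

lemma mobius_image (A B C D : ℂ) (N : ℝ) (hN : 0 < N)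
    (hNval : (N:ℂ) = D * (starRingEnd ℂ) D - C * (starRingEnd ℂ) C)
    (hdet : A * D - B * C ≠ 0) :
    (fun z => (A*z + B)/(C*z + D)) '' ball 0 1 =
      ball ((B * (starRingEnd ℂ) D - A * (starRingEnd ℂ) C)/(N:ℂ))
        (‖A*D - B*C‖/N) := by
  have hNC : (N:ℂ) ≠ 0 := Complex.ofReal_ne_zero.mpr hN.ne'
  have hNr : N = normSq D - normSq C := by
    have h := hNval
    rw [Complex.mul_conj, Complex.mul_conj] at h
    exact_mod_cast h
  have hCD : ‖C‖ < ‖D‖ := by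
    have h1 : ‖C‖ ^ 2 < ‖D‖ ^ 2 := by
      rw [Complex.sq_norm, Complex.sq_norm]; linarith
    exact lt_of_pow_lt_pow_left₀ 2 (norm_nonneg D) h1
  have hden : ∀ z : ℂ, ‖z‖ ≤ 1 → C * z + D ≠ 0 := by
    intro z hz h0
    have hD : D = -(C*z) := by linear_combination h0
    have : ‖D‖ = ‖C‖ * ‖z‖ := by
      rw [hD, norm_neg, norm_mul]
    nlinarith [norm_nonneg C]
  have hΔ : 0 < ‖A*D - B*C‖ := norm_pos_iff.mpr hdet
  have key : ∀ z : ℂ, C*z + D ≠ 0 →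
      (‖(A*z+B)/(C*z+D) - (B * (starRingEnd ℂ) D - A * (starRingEnd ℂ) C)/(N:ℂ)‖
        < ‖A*D - B*C‖/N ↔ ‖z‖ < 1) := by
    intro z hz
    have hnum : (A*z+B)*(N:ℂ) - (C*z+D)*(B * (starRingEnd ℂ) D - A * (starRingEnd ℂ) C)
        = (A*D - B*C)*((starRingEnd ℂ) D * z + (starRingEnd ℂ) C) := by
      linear_combination (A*z+B)*hNval
    have hrw : (A*z+B)/(C*z+D) - (B * (starRingEnd ℂ) D - A * (starRingEnd ℂ) C)/(N:ℂ)
        = ((A*D - B*C)*((starRingEnd ℂ) D * z + (starRingEnd ℂ) C))/((C*z+D)*(N:ℂ)) := by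
      rw [div_sub_div _ _ hz hNC, hnum]
    rw [hrw, norm_div, norm_mul, norm_mul, Complex.norm_real, Real.norm_eq_abs, abs_of_pos hN]
    set k := ‖C*z+D‖ with hk
    set m := ‖(starRingEnd ℂ) D * z + (starRingEnd ℂ) C‖ with hm
    set d := ‖A*D - B*C‖ with hd
    have hkpos : 0 < k := norm_pos_iff.mpr hz
    have hmnn : 0 ≤ m := norm_nonneg _
    have hid : ((normSq (C*z+D) : ℝ) : ℂ) - ((normSq ((starRingEnd ℂ) D*z + (starRingEnd ℂ) C) :ℝ):ℂ)
        = (N:ℂ)*(1 - ((normSq z : ℝ):ℂ)) := by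
      rw [← Complex.mul_conj, ← Complex.mul_conj, ← Complex.mul_conj]
      simp only [map_add, map_mul, Complex.conj_conj]
      linear_combination (z * (starRingEnd ℂ) z - 1)*hNval
    have hreal : normSq (C*z+D) - normSq ((starRingEnd ℂ) D*z + (starRingEnd ℂ) C)
        = N*(1 - normSq z) := by exact_mod_cast hid
    have e1 : m^2 = normSq ((starRingEnd ℂ) D*z + (starRingEnd ℂ) C) := Complex.sq_norm _
    have e2 : k^2 = normSq (C*z+D) := Complex.sq_norm _
    have e3 : ‖z‖ ^ 2 = normSq z := Complex.sq_norm _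
    have hmain : m < k ↔ ‖z‖ < 1 := by
      constructor
      · intro hmk
        have h2 : m^2 < k^2 := by nlinarith
        have hz2 : normSq z < 1 := by nlinarith
        nlinarith [norm_nonneg z]
      · intro hz1
        have hz2 : normSq z < 1 := by nlinarith [norm_nonneg z]
        have h2 : m^2 < k^2 := by nlinarith
        nlinarith
    rw [← hmain]
    rw [div_lt_div_iff₀ (mul_pos hkpos hN) hN]
    have hdN : 0 < d*N := mul_pos hΔ hN
    constructor
    · intro h; nlinarith [hdN]
    · intro h; nlinarith [hdN]
  ext w
  constructor
  · rintro ⟨z, hz, rfl⟩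
    have hz1 : ‖z‖ < 1 := by
      simpa [mem_ball, Complex.dist_eq] using hz
    have h := (key z (hden z hz1.le)).mpr hz1
    simpa [mem_ball, Complex.dist_eq] using h
  · intro hw
    have hw' : ‖w - (B * (starRingEnd ℂ) D - A * (starRingEnd ℂ) C)/(N:ℂ)‖
        < ‖A*D - B*C‖/N := by
      simpa [mem_ball, Complex.dist_eq] using hw
    have hACw : A - C*w ≠ 0 := by
      intro h0
      by_cases hC : C = 0
      · apply hdet
        have hA : A = 0 := by rw [hC] at h0; simpa using h0
        rw [hA, hC]; ring
      · have hwAC : w = A/C := by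
          field_simp
          linear_combination -h0
        have hsub : A/C - (B * (starRingEnd ℂ) D - A * (starRingEnd ℂ) C)/(N:ℂ)
            = ((starRingEnd ℂ) D*(A*D - B*C))/(C*(N:ℂ)) := by
          rw [div_sub_div _ _ hC hNC]
          congr 1
          linear_combination A*hNval
        rw [hwAC, hsub, norm_div, norm_mul, norm_mul, Complex.norm_conj,
          Complex.norm_real, Real.norm_eq_abs, abs_of_pos hN, div_lt_div_iff₀
            (mul_pos (norm_pos_iff.mpr hC) hN) hN] at hw'
        have h3 : 0 < ‖A*D-B*C‖ * N := mul_pos hΔ hN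
        nlinarith [mul_lt_mul_of_pos_left hCD h3]
    have hz0 : C*((D*w - B)/(A - C*w)) + D = (A*D - B*C)/(A - C*w) := by
      field_simp; ring
    have hzden : C*((D*w - B)/(A - C*w)) + D ≠ 0 := by
      rw [hz0]; exact div_ne_zero hdet hACw
    have hnum2 : A*((D*w - B)/(A - C*w)) + B = w*(A*D - B*C)/(A - C*w) := by
      rw [← mul_div_assoc, div_add' _ _ _ hACw]; ring
    have haux : ∀ p q r : ℂ, r ≠ 0 → q ≠ 0 → (p*q/r)/(q/r) = p := by
      intro p q r hr hq; field_simp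
    have hφw : (A*((D*w - B)/(A - C*w)) + B)/(C*((D*w - B)/(A - C*w)) + D) = w := by
      rw [hnum2, hz0]
      exact haux w _ _ hACw hdet
    refine ⟨(D*w - B)/(A - C*w), ?_, hφw⟩
    have habs : ‖(D*w - B)/(A - C*w)‖ < 1 := by
      apply (key _ hzden).mp
      rw [hφw]
      exact hw'
    simpa [mem_ball, Complex.dist_eq] using habs

/-- The parabolic map `ρ_{γ,a}(z) = γ((2−a)z + aγ)/((2+a)γ − az)`. -/
noncomputable def rho (γ a z : ℂ) : ℂ := γ * ((2 - a) * z + a * γ) / ((2 + a) * γ - a * z)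

set_option maxHeartbeats 1600000 in
theorem stmt_0 (A B C D : ℂ) (hdet : A * D - B * C ≠ 0)
    (φ σ : ℂ → ℂ)
    (hφ : ∀ z, φ z = (A * z + B) / (C * z + D))
    (hσ : ∀ z, σ z = ((starRingEnd ℂ) A * z - (starRingEnd ℂ) C) /
      (-(starRingEnd ℂ) B * z + (starRingEnd ℂ) D))
    (hden : ∀ z : ℂ, ‖z‖ ≤ 1 → C * z + D ≠ 0)
    (hmaps : ∀ z : ℂ, ‖z‖ < 1 → ‖φ z‖ < 1)
    (hnotonto : φ '' Metric.ball 0 1 ≠ Metric.ball 0 1)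
    (ζ η : ℂ) (hζ : ‖ζ‖ = 1) (hη : ‖η‖ = 1) (hne : ζ ≠ η)
    (hφζ : φ ζ = η)
    (b c : ℝ) (hb : 0 < b) (hc : 0 < c)
    (hbim : (fun z => rho η (b : ℂ) z) '' Metric.ball 0 1 = φ '' Metric.ball 0 1)
    (hcim : (fun z => rho ζ (c : ℂ) z) '' Metric.ball 0 1 = σ '' Metric.ball 0 1) :
    c = ‖deriv φ ζ‖ * b ∧
      ∀ z ∈ Metric.ball (0 : ℂ) 1,
        φ (σ z) = rho η ((2 * b : ℝ) : ℂ) z ∧ σ (φ z) = rho ζ ((2 * c : ℝ) : ℂ) z := by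
  have hζ0 : ζ ≠ 0 := by intro h; rw [h] at hζ; simp at hζ
  have hη0 : η ≠ 0 := by intro h; rw [h] at hη; simp at hη
  have hζC : ζ * (starRingEnd ℂ) ζ = 1 := by
    have h : Complex.normSq ζ = 1 := by rw [Complex.normSq_eq_norm_sq, hζ]; norm_num
    rw [Complex.mul_conj, h]; norm_num
  have hηC : η * (starRingEnd ℂ) η = 1 := by
    have h : Complex.normSq η = 1 := by rw [Complex.normSq_eq_norm_sq, hη]; norm_num
    rw [Complex.mul_conj, h]; norm_num
  have hD0 : D ≠ 0 := by have := hden 0 (by simp); simpa using this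
  have hu0 : C*ζ + D ≠ 0 := hden ζ hζ.le
  have hE5 : A*ζ + B = η*(C*ζ + D) := by
    have h := hφζ
    rw [hφ ζ] at h
    rw [div_eq_iff hu0] at h
    linear_combination h
  have hE5c : (starRingEnd ℂ) A*(starRingEnd ℂ) ζ + (starRingEnd ℂ) B = (starRingEnd ℂ) η*((starRingEnd ℂ) C*(starRingEnd ℂ) ζ + (starRingEnd ℂ) D) := by
    have h := congrArg (starRingEnd ℂ) hE5
    simpa only [map_add, map_mul] using h
  -- the two real parameters
  set N : ℝ := Complex.normSq D - Complex.normSq C with hNdef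
  set N' : ℝ := Complex.normSq D - Complex.normSq B with hN'def
  have hNpos : 0 < N := by
    rcases eq_or_ne C 0 with hC | hC
    · rw [hNdef, hC]; simpa using Complex.normSq_pos.mpr hD0
    · by_contra hcon
      push_neg at hcon
      have hle : ‖D‖ ≤ ‖C‖ := by
        have h1 : ‖D‖ ^ 2 ≤ ‖C‖ ^ 2 := by
          rw [Complex.sq_norm, Complex.sq_norm]
          have := hcon; rw [hNdef] at this; linarith
        nlinarith [norm_nonneg C, norm_nonneg D]
      have habs : ‖-D/C‖ ≤ 1 := by
        rw [norm_div, norm_neg]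
        rw [div_le_one (norm_pos_iff.mpr hC)]
        exact hle
      exact hden _ habs (by field_simp; ring)
  have hBD : ‖B‖ < ‖D‖ := by
    have h0 : ‖φ 0‖ < 1 := hmaps 0 (by simp)
    rw [hφ 0] at h0
    simp only [mul_zero, zero_add] at h0
    rw [norm_div, div_lt_one (norm_pos_iff.mpr hD0)] at h0
    exact h0
  have hN'pos : 0 < N' := by
    rw [hN'def, ← Complex.sq_norm, ← Complex.sq_norm]
    nlinarith [norm_nonneg B]
  have hNval : ((N:ℝ):ℂ) = D*(starRingEnd ℂ) D - C*(starRingEnd ℂ) C := by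
    rw [Complex.mul_conj, Complex.mul_conj, hNdef]; push_cast; ring
  have hN'val : ((N':ℝ):ℂ) = D*(starRingEnd ℂ) D - B*(starRingEnd ℂ) B := by
    rw [Complex.mul_conj, Complex.mul_conj, hN'def]; push_cast; ring
  have hNC0 : ((N:ℝ):ℂ) ≠ 0 := Complex.ofReal_ne_zero.mpr hNpos.ne'
  have hNP0 : ((N':ℝ):ℂ) ≠ 0 := Complex.ofReal_ne_zero.mpr hN'pos.ne'
  -- image of φ
  have hφfun : φ = fun z => (A*z + B)/(C*z + D) := funext hφ
  have himφ : φ '' Metric.ball 0 1 = Metric.ball ((B * (starRingEnd ℂ) D - A * (starRingEnd ℂ) C)/((N:ℝ):ℂ))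
      (‖A*D - B*C‖/N) := by
    rw [hφfun]; exact mobius_image A B C D N hNpos hNval hdet
  -- image of σ
  have hσfun : σ = fun z => ((starRingEnd ℂ) A*z + (-(starRingEnd ℂ) C))/((-(starRingEnd ℂ) B)*z + (starRingEnd ℂ) D) := by
    funext z; rw [hσ z]; ring_nf
  have hdetσ : (starRingEnd ℂ) A*(starRingEnd ℂ) D - (-(starRingEnd ℂ) C)*(-(starRingEnd ℂ) B) ≠ 0 := by
    have h : (starRingEnd ℂ) A*(starRingEnd ℂ) D - (-(starRingEnd ℂ) C)*(-(starRingEnd ℂ) B) = (starRingEnd ℂ) (A*D - B*C) := by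
      rw [map_sub, map_mul, map_mul]; ring
    rw [h, starRingEnd_apply]
    exact star_ne_zero.mpr hdet
  have hN'valσ : ((N':ℝ):ℂ) = (starRingEnd ℂ) D * (starRingEnd ℂ) ((starRingEnd ℂ) D)
      - (-(starRingEnd ℂ) B) * (starRingEnd ℂ) (-(starRingEnd ℂ) B) := by
    simp only [Complex.conj_conj, map_neg, neg_mul_neg]
    rw [hN'val]; ring
  have himσ : σ '' Metric.ball 0 1 = Metric.ball (((-(starRingEnd ℂ) C) * (starRingEnd ℂ) ((starRingEnd ℂ) D)
      - (starRingEnd ℂ) A * (starRingEnd ℂ) (-(starRingEnd ℂ) B))/((N':ℝ):ℂ))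
      (‖(starRingEnd ℂ) A*(starRingEnd ℂ) D - (-(starRingEnd ℂ) C)*(-(starRingEnd ℂ) B)‖/N') := by
    rw [hσfun]
    exact mobius_image ((starRingEnd ℂ) A) (-(starRingEnd ℂ) C) (-(starRingEnd ℂ) B) ((starRingEnd ℂ) D) N' hN'pos hN'valσ hdetσ
  -- image of rho η b
  have hρbfun : (fun z => rho η ((b:ℝ):ℂ) z)
      = fun z => ((η*(2-((b:ℝ):ℂ)))*z + ((b:ℝ):ℂ)*η^2)/((-((b:ℝ):ℂ))*z + (2+((b:ℝ):ℂ))*η) := by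
    funext z; rw [rho]; ring_nf
  have hdetρb : (η*(2-((b:ℝ):ℂ)))*((2+((b:ℝ):ℂ))*η) - (((b:ℝ):ℂ)*η^2)*(-((b:ℝ):ℂ)) ≠ 0 := by
    have h : (η*(2-((b:ℝ):ℂ)))*((2+((b:ℝ):ℂ))*η) - (((b:ℝ):ℂ)*η^2)*(-((b:ℝ):ℂ)) = 4*η^2 := by ring
    rw [h]
    simp [hη0]
  have hNρb : ((4+4*b:ℝ):ℂ) = ((2+((b:ℝ):ℂ))*η) * (starRingEnd ℂ) ((2+((b:ℝ):ℂ))*η)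
      - (-((b:ℝ):ℂ)) * (starRingEnd ℂ) (-((b:ℝ):ℂ)) := by
    simp only [map_mul, map_add, map_neg, Complex.conj_ofReal, map_ofNat, neg_mul_neg]
    push_cast
    linear_combination (-(2+((b:ℝ):ℂ))^2) * hηC
  have himρb : (fun z => rho η ((b:ℝ):ℂ) z) '' Metric.ball 0 1
      = Metric.ball ((((b:ℝ):ℂ)*η^2 * (starRingEnd ℂ) ((2+((b:ℝ):ℂ))*η)
          - (η*(2-((b:ℝ):ℂ))) * (starRingEnd ℂ) (-((b:ℝ):ℂ)))/((4+4*b:ℝ):ℂ))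
        (‖(η*(2-((b:ℝ):ℂ)))*((2+((b:ℝ):ℂ))*η) - (((b:ℝ):ℂ)*η^2)*(-((b:ℝ):ℂ))‖/(4+4*b)) := by
    rw [hρbfun]
    exact mobius_image (η*(2-((b:ℝ):ℂ))) (((b:ℝ):ℂ)*η^2) (-((b:ℝ):ℂ)) ((2+((b:ℝ):ℂ))*η) (4+4*b)
      (by linarith) hNρb hdetρb
  -- image of rho ζ c
  have hρcfun : (fun z => rho ζ ((c:ℝ):ℂ) z)
      = fun z => ((ζ*(2-((c:ℝ):ℂ)))*z + ((c:ℝ):ℂ)*ζ^2)/((-((c:ℝ):ℂ))*z + (2+((c:ℝ):ℂ))*ζ) := by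
    funext z; rw [rho]; ring_nf
  have hdetρc : (ζ*(2-((c:ℝ):ℂ)))*((2+((c:ℝ):ℂ))*ζ) - (((c:ℝ):ℂ)*ζ^2)*(-((c:ℝ):ℂ)) ≠ 0 := by
    have h : (ζ*(2-((c:ℝ):ℂ)))*((2+((c:ℝ):ℂ))*ζ) - (((c:ℝ):ℂ)*ζ^2)*(-((c:ℝ):ℂ)) = 4*ζ^2 := by ring
    rw [h]
    simp [hζ0]
  have hNρc : ((4+4*c:ℝ):ℂ) = ((2+((c:ℝ):ℂ))*ζ) * (starRingEnd ℂ) ((2+((c:ℝ):ℂ))*ζ)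
      - (-((c:ℝ):ℂ)) * (starRingEnd ℂ) (-((c:ℝ):ℂ)) := by
    simp only [map_mul, map_add, map_neg, Complex.conj_ofReal, map_ofNat, neg_mul_neg]
    push_cast
    linear_combination (-(2+((c:ℝ):ℂ))^2) * hζC
  have himρc : (fun z => rho ζ ((c:ℝ):ℂ) z) '' Metric.ball 0 1
      = Metric.ball ((((c:ℝ):ℂ)*ζ^2 * (starRingEnd ℂ) ((2+((c:ℝ):ℂ))*ζ)
          - (ζ*(2-((c:ℝ):ℂ))) * (starRingEnd ℂ) (-((c:ℝ):ℂ)))/((4+4*c:ℝ):ℂ))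
        (‖(ζ*(2-((c:ℝ):ℂ)))*((2+((c:ℝ):ℂ))*ζ) - (((c:ℝ):ℂ)*ζ^2)*(-((c:ℝ):ℂ))‖/(4+4*c)) := by
    rw [hρcfun]
    exact mobius_image (ζ*(2-((c:ℝ):ℂ))) (((c:ℝ):ℂ)*ζ^2) (-((c:ℝ):ℂ)) ((2+((c:ℝ):ℂ))*ζ) (4+4*c)
      (by linarith) hNρc hdetρc
  -- extract center/radius equations
  rw [himρb, himφ] at hbim
  rw [himρc, himσ] at hcim
  have habs4b : ‖(η*(2-((b:ℝ):ℂ)))*((2+((b:ℝ):ℂ))*η) - (((b:ℝ):ℂ)*η^2)*(-((b:ℝ):ℂ))‖ = 4 := by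
    have h : (η*(2-((b:ℝ):ℂ)))*((2+((b:ℝ):ℂ))*η) - (((b:ℝ):ℂ)*η^2)*(-((b:ℝ):ℂ)) = 4*η^2 := by ring
    rw [h, norm_mul, norm_pow, hη]
    simp
  have habs4c : ‖(ζ*(2-((c:ℝ):ℂ)))*((2+((c:ℝ):ℂ))*ζ) - (((c:ℝ):ℂ)*ζ^2)*(-((c:ℝ):ℂ))‖ = 4 := by
    have h : (ζ*(2-((c:ℝ):ℂ)))*((2+((c:ℝ):ℂ))*ζ) - (((c:ℝ):ℂ)*ζ^2)*(-((c:ℝ):ℂ)) = 4*ζ^2 := by ring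
    rw [h, norm_mul, norm_pow, hζ]
    simp
  obtain ⟨hcen1, hrad1⟩ := ball_eq_ball_param
    (by rw [habs4b]; positivity) (div_pos (norm_pos_iff.mpr hdet) hNpos) hbim
  obtain ⟨hcen2, hrad2⟩ := ball_eq_ball_param
    (by rw [habs4c]; positivity) (div_pos (norm_pos_iff.mpr hdetσ) hN'pos) hcim
  rw [habs4b] at hrad1
  rw [habs4c] at hrad2
  have hE2 : (1+b) * ‖A*D - B*C‖ = N := by
    rw [div_eq_div_iff (by linarith) hNpos.ne'] at hrad1
    linarith
  have hE4 : (1+c) * ‖A*D - B*C‖ = N' := by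
    rw [div_eq_div_iff (by linarith) hN'pos.ne'] at hrad2
    have h : ‖(starRingEnd ℂ) A*(starRingEnd ℂ) D - (-(starRingEnd ℂ) C)*(-(starRingEnd ℂ) B)‖ = ‖A*D - B*C‖ := by
      have h2 : (starRingEnd ℂ) A*(starRingEnd ℂ) D - (-(starRingEnd ℂ) C)*(-(starRingEnd ℂ) B) = (starRingEnd ℂ) (A*D - B*C) := by
        rw [map_sub, map_mul, map_mul]; ring
      rw [h2, Complex.norm_conj]
    rw [h] at hrad2
    linarith
  have hE1 : (1+((b:ℝ):ℂ))*(B*(starRingEnd ℂ) D - A*(starRingEnd ℂ) C) = ((b:ℝ):ℂ)*η*((N:ℝ):ℂ) := by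
    rw [div_eq_div_iff (Complex.ofReal_ne_zero.mpr (by linarith : (4+4*b:ℝ) ≠ 0)) hNC0] at hcen1
    simp only [map_mul, map_add, map_neg, Complex.conj_ofReal, map_ofNat, map_pow] at hcen1
    push_cast at hcen1 ⊢
    linear_combination (-1/4 : ℂ) * hcen1 + (((b:ℝ):ℂ)*η*(2+((b:ℝ):ℂ))*((N:ℝ):ℂ)/4)*hηC
  have hE3 : (1+((c:ℝ):ℂ))*((starRingEnd ℂ) A*B - (starRingEnd ℂ) C*D) = ((c:ℝ):ℂ)*ζ*((N':ℝ):ℂ) := by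
    rw [div_eq_div_iff (Complex.ofReal_ne_zero.mpr (by linarith : (4+4*c:ℝ) ≠ 0)) hNP0] at hcen2
    simp only [map_mul, map_add, map_neg, Complex.conj_ofReal, map_ofNat, map_pow,
      Complex.conj_conj, neg_mul, neg_neg] at hcen2
    push_cast at hcen2 ⊢
    linear_combination (-1/4 : ℂ) * hcen2 + (((c:ℝ):ℂ)*ζ*(2+((c:ℝ):ℂ))*((N':ℝ):ℂ)/4)*hζC
    -- conjugated hypotheses
  have h1b : (1:ℂ)+((b:ℝ):ℂ) ≠ 0 := by
    rw [show (1:ℂ)+((b:ℝ):ℂ) = ((1+b:ℝ):ℂ) by push_cast; ring]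
    exact Complex.ofReal_ne_zero.mpr (by linarith)
  have h1c : (1:ℂ)+((c:ℝ):ℂ) ≠ 0 := by
    rw [show (1:ℂ)+((c:ℝ):ℂ) = ((1+c:ℝ):ℂ) by push_cast; ring]
    exact Complex.ofReal_ne_zero.mpr (by linarith)
  have hE1c : (1+((b:ℝ):ℂ))*((((starRingEnd ℂ) B)*D - ((starRingEnd ℂ) A)*C)) = ((b:ℝ):ℂ)*((starRingEnd ℂ) η)*((N:ℝ):ℂ) := by
    have h := congrArg (starRingEnd ℂ) hE1
    simpa only [map_mul, map_add, map_sub, map_one, Complex.conj_ofReal,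
      Complex.conj_conj] using h
  have hE3c : (1+((c:ℝ):ℂ))*((A*((starRingEnd ℂ) B) - C*((starRingEnd ℂ) D))) = ((c:ℝ):ℂ)*((starRingEnd ℂ) ζ)*((N':ℝ):ℂ) := by
    have h := congrArg (starRingEnd ℂ) hE3
    simpa only [map_mul, map_add, map_sub, map_one, Complex.conj_ofReal,
      Complex.conj_conj] using h
  -- pure algebraic identities
  have hDel : A*D - B*C = (C*ζ + D)*(A - η*C) := by linear_combination (-C)*hE5
  have hDelc : ((starRingEnd ℂ) A)*((starRingEnd ℂ) D) - ((starRingEnd ℂ) B)*((starRingEnd ℂ) C) = (((starRingEnd ℂ) C)*((starRingEnd ℂ) ζ) + ((starRingEnd ℂ) D))*(((starRingEnd ℂ) A) - ((starRingEnd ℂ) η)*((starRingEnd ℂ) C)) := by linear_combination (-((starRingEnd ℂ) C))*hE5c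
  have hQ1 : (B*((starRingEnd ℂ) D) - A*((starRingEnd ℂ) C)) = η*(C*ζ + D)*((starRingEnd ℂ) D) - ζ*A*(((starRingEnd ℂ) C)*((starRingEnd ℂ) ζ) + ((starRingEnd ℂ) D)) := by
    linear_combination ((starRingEnd ℂ) D)*hE5 + (A*((starRingEnd ℂ) C))*hζC
  have hP1x : (((starRingEnd ℂ) ζ)*η*(C*ζ + D)*(((starRingEnd ℂ) A) - ((starRingEnd ℂ) η)*((starRingEnd ℂ) C))) = ((N:ℝ):ℂ) - η*(((starRingEnd ℂ) B)*D - ((starRingEnd ℂ) A)*C) := by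
    linear_combination (η*D)*hE5c + (η*((starRingEnd ℂ) A)*C - C*((starRingEnd ℂ) C)*η*((starRingEnd ℂ) η))*hζC + (D*((starRingEnd ℂ) D) - C*((starRingEnd ℂ) C))*hηC - hNval
  have hP2x : (((starRingEnd ℂ) ζ)*η*(C*ζ + D)*(((starRingEnd ℂ) A) - ((starRingEnd ℂ) η)*((starRingEnd ℂ) C))) = ((N':ℝ):ℂ) - ζ*(A*((starRingEnd ℂ) B) - C*((starRingEnd ℂ) D)) := by
    linear_combination ((starRingEnd ℂ) B)*hE5 + (η*(C*ζ + D))*hE5c + ((C*ζ + D)*((starRingEnd ℂ) D))*hηC - hN'val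
  have hQ2 : ((starRingEnd ℂ) ζ)*(((starRingEnd ℂ) A)*B - ((starRingEnd ℂ) C)*D) = ((starRingEnd ℂ) ζ)*η*(((starRingEnd ℂ) A) - ((starRingEnd ℂ) η)*((starRingEnd ℂ) C))*D - ((starRingEnd ℂ) A)*(A - η*C) := by
    linear_combination (((starRingEnd ℂ) ζ)*((starRingEnd ℂ) A))*hE5 + (η*((starRingEnd ℂ) A)*C - ((starRingEnd ℂ) A)*A)*hζC + (((starRingEnd ℂ) ζ)*((starRingEnd ℂ) C)*D)*hηC
  have hts : (((starRingEnd ℂ) ζ)*η*(C*ζ + D)*(((starRingEnd ℂ) A) - ((starRingEnd ℂ) η)*((starRingEnd ℂ) C)))*(ζ*((starRingEnd ℂ) η)*(((starRingEnd ℂ) C)*((starRingEnd ℂ) ζ) + ((starRingEnd ℂ) D))*(A - η*C)) = (C*ζ + D)*(((starRingEnd ℂ) C)*((starRingEnd ℂ) ζ) + ((starRingEnd ℂ) D))*(A - η*C)*(((starRingEnd ℂ) A) - ((starRingEnd ℂ) η)*((starRingEnd ℂ) C)) := by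
    linear_combination ((C*ζ + D)*(((starRingEnd ℂ) C)*((starRingEnd ℂ) ζ) + ((starRingEnd ℂ) D))*(A - η*C)*(((starRingEnd ℂ) A) - ((starRingEnd ℂ) η)*((starRingEnd ℂ) C))*η*((starRingEnd ℂ) η))*hζC + ((C*ζ + D)*(((starRingEnd ℂ) C)*((starRingEnd ℂ) ζ) + ((starRingEnd ℂ) D))*(A - η*C)*(((starRingEnd ℂ) A) - ((starRingEnd ℂ) η)*((starRingEnd ℂ) C)))*hηC
  have hK1 : (1+((b:ℝ):ℂ))*(((starRingEnd ℂ) ζ)*η*(C*ζ + D)*(((starRingEnd ℂ) A) - ((starRingEnd ℂ) η)*((starRingEnd ℂ) C))) = ((N:ℝ):ℂ) := by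
    linear_combination (1+((b:ℝ):ℂ))*hP1x - η*hE1c - ((b:ℝ):ℂ)*((N:ℝ):ℂ)*hηC
  have hK2 : (1+((c:ℝ):ℂ))*(((starRingEnd ℂ) ζ)*η*(C*ζ + D)*(((starRingEnd ℂ) A) - ((starRingEnd ℂ) η)*((starRingEnd ℂ) C))) = ((N':ℝ):ℂ) := by
    linear_combination (1+((c:ℝ):ℂ))*hP2x - ζ*hE3c - ((c:ℝ):ℂ)*((N':ℝ):ℂ)*hζC
  -- squared-modulus equations in ℂ
  have hconjΔ : (starRingEnd ℂ) (A*D - B*C) = ((starRingEnd ℂ) A)*((starRingEnd ℂ) D) - ((starRingEnd ℂ) B)*((starRingEnd ℂ) C) := by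
    rw [map_sub, map_mul, map_mul]
  have hΔabs : (A*D-B*C)*(((starRingEnd ℂ) A)*((starRingEnd ℂ) D) - ((starRingEnd ℂ) B)*((starRingEnd ℂ) C)) = ((‖A*D-B*C‖^2 :ℝ):ℂ) := by
    rw [← hconjΔ, Complex.mul_conj, Complex.normSq_eq_norm_sq]
  have hE2C : (1+((b:ℝ):ℂ))^2*((A*D-B*C)*(((starRingEnd ℂ) A)*((starRingEnd ℂ) D)-((starRingEnd ℂ) B)*((starRingEnd ℂ) C))) = ((N:ℝ):ℂ)^2 := by
    rw [hΔabs]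
    have h2 : ((1+b)*‖A*D-B*C‖)^2 = N^2 := by rw [hE2]
    have h3 := congrArg (fun x:ℝ => (x:ℂ)) h2
    push_cast at h3 ⊢
    linear_combination h3
  have hE4C : (1+((c:ℝ):ℂ))^2*((A*D-B*C)*(((starRingEnd ℂ) A)*((starRingEnd ℂ) D)-((starRingEnd ℂ) B)*((starRingEnd ℂ) C))) = ((N':ℝ):ℂ)^2 := by
    rw [hΔabs]
    have h2 : ((1+c)*‖A*D-B*C‖)^2 = N'^2 := by rw [hE4]
    have h3 := congrArg (fun x:ℝ => (x:ℂ)) h2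
    push_cast at h3 ⊢
    linear_combination h3
  -- the X-relations
  have hNb0 : (1+((b:ℝ):ℂ))*((N:ℝ):ℂ) ≠ 0 := mul_ne_zero h1b hNC0
  have hNp0 : (1+((c:ℝ):ℂ))*((N':ℝ):ℂ) ≠ 0 := mul_ne_zero h1c hNP0
  have hXa : ((1+((b:ℝ):ℂ))*(A*((starRingEnd ℂ) A) - B*((starRingEnd ℂ) B)))*((1+((b:ℝ):ℂ))*((N:ℝ):ℂ)) = ((1-((b:ℝ):ℂ))*((N:ℝ):ℂ))*((1+((b:ℝ):ℂ))*((N:ℝ):ℂ)) := by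
    linear_combination ((1+((b:ℝ):ℂ))^2*(A*((starRingEnd ℂ) A) - B*((starRingEnd ℂ) B)))*hNval + hE2C - ((1+((b:ℝ):ℂ))*(((starRingEnd ℂ) B)*D - ((starRingEnd ℂ) A)*C))*hE1
      - (((b:ℝ):ℂ)*η*((N:ℝ):ℂ))*hE1c - ((b:ℝ):ℂ)^2*((N:ℝ):ℂ)^2*hηC
  have hX := mul_right_cancel₀ hNb0 hXa
  have hXpa : ((1+((c:ℝ):ℂ))*(A*((starRingEnd ℂ) A) - C*((starRingEnd ℂ) C)))*((1+((c:ℝ):ℂ))*((N':ℝ):ℂ)) = ((1-((c:ℝ):ℂ))*((N':ℝ):ℂ))*((1+((c:ℝ):ℂ))*((N':ℝ):ℂ)) := by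
    linear_combination ((1+((c:ℝ):ℂ))^2*(A*((starRingEnd ℂ) A) - C*((starRingEnd ℂ) C)))*hN'val + hE4C - ((1+((c:ℝ):ℂ))*(A*((starRingEnd ℂ) B) - C*((starRingEnd ℂ) D)))*hE3
      - (((c:ℝ):ℂ)*ζ*((N':ℝ):ℂ))*hE3c - ((c:ℝ):ℂ)^2*((N':ℝ):ℂ)^2*hζC
  have hXp := mul_right_cancel₀ hNp0 hXpa
  -- nonvanishing
  have hAL0 : (A - η*C) ≠ 0 := by
    intro h; apply hdet; rw [hDel, h, mul_zero]
  have hALB0 : (((starRingEnd ℂ) A) - ((starRingEnd ℂ) η)*((starRingEnd ℂ) C)) ≠ 0 := by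
    intro h0; apply hAL0
    have h := congrArg (starRingEnd ℂ) h0
    simpa only [map_sub, map_mul, map_zero, Complex.conj_conj] using h
  have hcζ0 : ((starRingEnd ℂ) ζ) ≠ 0 := by
    rw [starRingEnd_apply]; exact star_ne_zero.mpr hζ0
  have hT0 : (((starRingEnd ℂ) ζ)*η*(C*ζ + D)*(((starRingEnd ℂ) A) - ((starRingEnd ℂ) η)*((starRingEnd ℂ) C))) ≠ 0 :=
    mul_ne_zero (mul_ne_zero (mul_ne_zero hcζ0 hη0) hu0) hALB0
  -- main chain
  have hE2Cu : (1+((b:ℝ):ℂ))^2*(((C*ζ + D)*(A - η*C))*((((starRingEnd ℂ) C)*((starRingEnd ℂ) ζ) + ((starRingEnd ℂ) D))*(((starRingEnd ℂ) A) - ((starRingEnd ℂ) η)*((starRingEnd ℂ) C)))) = ((N:ℝ):ℂ)^2 := by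
    linear_combination hE2C - ((1+((b:ℝ):ℂ))^2*(((starRingEnd ℂ) A)*((starRingEnd ℂ) D)-((starRingEnd ℂ) B)*((starRingEnd ℂ) C)))*hDel
      - ((1+((b:ℝ):ℂ))^2*((C*ζ + D)*(A - η*C)))*hDelc
  have hE2t : (1+((b:ℝ):ℂ))^2*((C*ζ + D)*(((starRingEnd ℂ) C)*((starRingEnd ℂ) ζ) + ((starRingEnd ℂ) D))*(A - η*C)*(((starRingEnd ℂ) A) - ((starRingEnd ℂ) η)*((starRingEnd ℂ) C))) = ((1+((b:ℝ):ℂ))*(((starRingEnd ℂ) ζ)*η*(C*ζ + D)*(((starRingEnd ℂ) A) - ((starRingEnd ℂ) η)*((starRingEnd ℂ) C))))*((1+((b:ℝ):ℂ))*(((starRingEnd ℂ) ζ)*η*(C*ζ + D)*(((starRingEnd ℂ) A) - ((starRingEnd ℂ) η)*((starRingEnd ℂ) C)))) := by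
    linear_combination hE2Cu - ((1+((b:ℝ):ℂ))*(((starRingEnd ℂ) ζ)*η*(C*ζ + D)*(((starRingEnd ℂ) A) - ((starRingEnd ℂ) η)*((starRingEnd ℂ) C))) + ((N:ℝ):ℂ))*hK1
  have hUALt : (C*ζ + D)*(((starRingEnd ℂ) C)*((starRingEnd ℂ) ζ) + ((starRingEnd ℂ) D))*(A - η*C)*(((starRingEnd ℂ) A) - ((starRingEnd ℂ) η)*((starRingEnd ℂ) C)) = (((starRingEnd ℂ) ζ)*η*(C*ζ + D)*(((starRingEnd ℂ) A) - ((starRingEnd ℂ) η)*((starRingEnd ℂ) C)))*(((starRingEnd ℂ) ζ)*η*(C*ζ + D)*(((starRingEnd ℂ) A) - ((starRingEnd ℂ) η)*((starRingEnd ℂ) C))) := by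
    apply mul_left_cancel₀ (pow_ne_zero 2 h1b)
    linear_combination hE2t
  have hst : (ζ*((starRingEnd ℂ) η)*(((starRingEnd ℂ) C)*((starRingEnd ℂ) ζ) + ((starRingEnd ℂ) D))*(A - η*C)) = (((starRingEnd ℂ) ζ)*η*(C*ζ + D)*(((starRingEnd ℂ) A) - ((starRingEnd ℂ) η)*((starRingEnd ℂ) C))) := by
    apply mul_left_cancel₀ hT0
    calc (((starRingEnd ℂ) ζ)*η*(C*ζ + D)*(((starRingEnd ℂ) A) - ((starRingEnd ℂ) η)*((starRingEnd ℂ) C)))*(ζ*((starRingEnd ℂ) η)*(((starRingEnd ℂ) C)*((starRingEnd ℂ) ζ) + ((starRingEnd ℂ) D))*(A - η*C)) = (C*ζ + D)*(((starRingEnd ℂ) C)*((starRingEnd ℂ) ζ) + ((starRingEnd ℂ) D))*(A - η*C)*(((starRingEnd ℂ) A) - ((starRingEnd ℂ) η)*((starRingEnd ℂ) C)) := hts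
      _ = (((starRingEnd ℂ) ζ)*η*(C*ζ + D)*(((starRingEnd ℂ) A) - ((starRingEnd ℂ) η)*((starRingEnd ℂ) C)))*(((starRingEnd ℂ) ζ)*η*(C*ζ + D)*(((starRingEnd ℂ) A) - ((starRingEnd ℂ) η)*((starRingEnd ℂ) C))) := hUALt
  have hR1a : (1+((b:ℝ):ℂ))*(((b:ℝ):ℂ)*η*(((starRingEnd ℂ) ζ)*η*(C*ζ + D)*(((starRingEnd ℂ) A) - ((starRingEnd ℂ) η)*((starRingEnd ℂ) C)))) = (1+((b:ℝ):ℂ))*(η*(C*ζ + D)*((starRingEnd ℂ) D) - ζ*A*(((starRingEnd ℂ) C)*((starRingEnd ℂ) ζ) + ((starRingEnd ℂ) D))) := by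
    linear_combination ((b:ℝ):ℂ)*η*hK1 - hE1 + (1+((b:ℝ):ℂ))*hQ1
  have hR1b := mul_left_cancel₀ h1b hR1a
  have hR1 : ((b:ℝ):ℂ)*(((starRingEnd ℂ) ζ)*η*(C*ζ + D)*(((starRingEnd ℂ) A) - ((starRingEnd ℂ) η)*((starRingEnd ℂ) C))) = (C*ζ + D)*((starRingEnd ℂ) D) - ζ*((starRingEnd ℂ) η)*A*(((starRingEnd ℂ) C)*((starRingEnd ℂ) ζ) + ((starRingEnd ℂ) D)) := by
    linear_combination ((starRingEnd ℂ) η)*hR1b + ((C*ζ + D)*((starRingEnd ℂ) D) - ((b:ℝ):ℂ)*(((starRingEnd ℂ) ζ)*η*(C*ζ + D)*(((starRingEnd ℂ) A) - ((starRingEnd ℂ) η)*((starRingEnd ℂ) C))))*hηC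
  have hR1c' := congrArg (starRingEnd ℂ) hR1
  simp only [map_mul, map_add, map_sub, Complex.conj_ofReal, Complex.conj_conj] at hR1c'
  have hR1cT : ((b:ℝ):ℂ)*(((starRingEnd ℂ) ζ)*η*(C*ζ + D)*(((starRingEnd ℂ) A) - ((starRingEnd ℂ) η)*((starRingEnd ℂ) C))) = (((starRingEnd ℂ) C)*((starRingEnd ℂ) ζ) + ((starRingEnd ℂ) D))*D - ((starRingEnd ℂ) ζ)*η*((starRingEnd ℂ) A)*(C*ζ + D) := by
    linear_combination hR1c' - ((b:ℝ):ℂ)*hst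
  have hR3a : (1+((c:ℝ):ℂ))*(((c:ℝ):ℂ)*ζ*(((starRingEnd ℂ) ζ)*η*(C*ζ + D)*(((starRingEnd ℂ) A) - ((starRingEnd ℂ) η)*((starRingEnd ℂ) C)))) = (1+((c:ℝ):ℂ))*(((starRingEnd ℂ) A)*B - ((starRingEnd ℂ) C)*D) := by
    linear_combination ((c:ℝ):ℂ)*ζ*hK2 - hE3
  have hYpT : (((starRingEnd ℂ) A)*B - ((starRingEnd ℂ) C)*D) = ((c:ℝ):ℂ)*ζ*(((starRingEnd ℂ) ζ)*η*(C*ζ + D)*(((starRingEnd ℂ) A) - ((starRingEnd ℂ) η)*((starRingEnd ℂ) C))) := (mul_left_cancel₀ h1c hR3a).symm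
  have hR3 : ((c:ℝ):ℂ)*(((starRingEnd ℂ) ζ)*η*(C*ζ + D)*(((starRingEnd ℂ) A) - ((starRingEnd ℂ) η)*((starRingEnd ℂ) C))) = ((starRingEnd ℂ) ζ)*η*(((starRingEnd ℂ) A) - ((starRingEnd ℂ) η)*((starRingEnd ℂ) C))*D - ((starRingEnd ℂ) A)*(A - η*C) := by
    linear_combination hQ2 - ((starRingEnd ℂ) ζ)*hYpT - ((c:ℝ):ℂ)*(((starRingEnd ℂ) ζ)*η*(C*ζ + D)*(((starRingEnd ℂ) A) - ((starRingEnd ℂ) η)*((starRingEnd ℂ) C)))*hζC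
  have hM : (((c:ℝ):ℂ)*(((starRingEnd ℂ) ζ)*η*(C*ζ + D)*(((starRingEnd ℂ) A) - ((starRingEnd ℂ) η)*((starRingEnd ℂ) C))))*((C*ζ + D)*(((starRingEnd ℂ) C)*((starRingEnd ℂ) ζ) + ((starRingEnd ℂ) D))) = (((b:ℝ):ℂ)*(((starRingEnd ℂ) ζ)*η*(C*ζ + D)*(((starRingEnd ℂ) A) - ((starRingEnd ℂ) η)*((starRingEnd ℂ) C))))*(((starRingEnd ℂ) ζ)*η*(C*ζ + D)*(((starRingEnd ℂ) A) - ((starRingEnd ℂ) η)*((starRingEnd ℂ) C))) := by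
    linear_combination ((C*ζ + D)*(((starRingEnd ℂ) C)*((starRingEnd ℂ) ζ) + ((starRingEnd ℂ) D)))*hR3 - (((starRingEnd ℂ) ζ)*η*(C*ζ + D)*(((starRingEnd ℂ) A) - ((starRingEnd ℂ) η)*((starRingEnd ℂ) C)))*hR1cT + (-(((starRingEnd ℂ) A)*(C*ζ + D)*((starRingEnd ℂ) ζ)*η))*hst
      + (((starRingEnd ℂ) A)*(C*ζ + D)*(((starRingEnd ℂ) C)*((starRingEnd ℂ) ζ) + ((starRingEnd ℂ) D))*(A - η*C)*η*((starRingEnd ℂ) η))*hζC + (((starRingEnd ℂ) A)*(C*ζ + D)*(((starRingEnd ℂ) C)*((starRingEnd ℂ) ζ) + ((starRingEnd ℂ) D))*(A - η*C))*hηC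
  have hM3 : ((((starRingEnd ℂ) ζ)*η*(C*ζ + D)*(((starRingEnd ℂ) A) - ((starRingEnd ℂ) η)*((starRingEnd ℂ) C)))*(((starRingEnd ℂ) ζ)*η*(C*ζ + D)*(((starRingEnd ℂ) A) - ((starRingEnd ℂ) η)*((starRingEnd ℂ) C))))*(((c:ℝ):ℂ)*(((starRingEnd ℂ) ζ)*η*(C*ζ + D)*(((starRingEnd ℂ) A) - ((starRingEnd ℂ) η)*((starRingEnd ℂ) C)))) = ((((starRingEnd ℂ) ζ)*η*(C*ζ + D)*(((starRingEnd ℂ) A) - ((starRingEnd ℂ) η)*((starRingEnd ℂ) C)))*(((starRingEnd ℂ) ζ)*η*(C*ζ + D)*(((starRingEnd ℂ) A) - ((starRingEnd ℂ) η)*((starRingEnd ℂ) C))))*(((b:ℝ):ℂ)*((A - η*C)*(((starRingEnd ℂ) A) - ((starRingEnd ℂ) η)*((starRingEnd ℂ) C)))) := by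
    linear_combination ((A - η*C)*(((starRingEnd ℂ) A) - ((starRingEnd ℂ) η)*((starRingEnd ℂ) C)))*hM - ((c:ℝ):ℂ)*(((starRingEnd ℂ) ζ)*η*(C*ζ + D)*(((starRingEnd ℂ) A) - ((starRingEnd ℂ) η)*((starRingEnd ℂ) C)))*hUALt
  have hMain2 : ((c:ℝ):ℂ)*(((starRingEnd ℂ) ζ)*η*(C*ζ + D)*(((starRingEnd ℂ) A) - ((starRingEnd ℂ) η)*((starRingEnd ℂ) C))) = ((b:ℝ):ℂ)*((A - η*C)*(((starRingEnd ℂ) A) - ((starRingEnd ℂ) η)*((starRingEnd ℂ) C))) := mul_left_cancel₀ (mul_ne_zero hT0 hT0) hM3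
  have hT3a : (((starRingEnd ℂ) A) - ((starRingEnd ℂ) η)*((starRingEnd ℂ) C))*(((c:ℝ):ℂ)*(η*(C*ζ + D))) = (((starRingEnd ℂ) A) - ((starRingEnd ℂ) η)*((starRingEnd ℂ) C))*(((b:ℝ):ℂ)*(ζ*(A - η*C))) := by
    linear_combination ζ*hMain2 - ((c:ℝ):ℂ)*η*(C*ζ + D)*(((starRingEnd ℂ) A) - ((starRingEnd ℂ) η)*((starRingEnd ℂ) C))*hζC
  have hT3 : ((c:ℝ):ℂ)*(η*(C*ζ + D)) = ((b:ℝ):ℂ)*(ζ*(A - η*C)) := mul_left_cancel₀ hALB0 hT3a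
  -- derivative of φ at ζ
  have hd1 : HasDerivAt (fun z => A*z + B) A ζ := by
    simpa using ((hasDerivAt_id ζ).const_mul A).add_const B
  have hd2 : HasDerivAt (fun z => C*z + D) C ζ := by
    simpa using ((hasDerivAt_id ζ).const_mul C).add_const D
  have hdq := hd1.div hd2 hu0
  have hderiv : deriv φ ζ = (A*D - B*C)/(C*ζ+D)^2 := by
    rw [hφfun, show (fun z => (A*z+B)/(C*z+D)) = ((fun z => A*z + B) / fun z => C*z + D) from rfl, hdq.deriv]
    congr 1
    ring
  -- helper for nested fractions
  have hdd : ∀ p q d : ℂ, d ≠ 0 → q ≠ 0 → (p/d)/(q/d) = p/q := by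
    intro p q d hd hq; field_simp
  constructor
  · -- c = |φ'(ζ)| * b
    have habs3 := congrArg (fun x : ℂ => ‖x‖) hT3
    simp only [norm_mul, Complex.norm_real, Real.norm_eq_abs, hη, hζ, one_mul] at habs3
    rw [abs_of_pos hc, abs_of_pos hb] at habs3
    rw [hderiv, norm_div, norm_pow]
    have hΔuv : ‖A*D - B*C‖ = ‖C*ζ + D‖ * ‖A - η*C‖ := by
      rw [hDel, norm_mul]
    rw [hΔuv]
    have hupos : 0 < ‖C*ζ + D‖ := norm_pos_iff.mpr hu0
    field_simp
    rw [show A - C*η = A - η*C by ring]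
    nlinarith [habs3, hupos]
  · intro z hz
    have hz1 : ‖z‖ < 1 := by simpa [Metric.mem_ball, Complex.dist_eq] using hz
    have hdz1 : -((starRingEnd ℂ) B)*z + ((starRingEnd ℂ) D) ≠ 0 := by
      intro h0
      have h1 : ((starRingEnd ℂ) D) = ((starRingEnd ℂ) B) * z := by linear_combination h0
      have h2 : ‖D‖ = ‖B‖ * ‖z‖ := by
        rw [← Complex.norm_conj D, h1, norm_mul, Complex.norm_conj]
      nlinarith [norm_nonneg B]
    have hdzφ : C*z + D ≠ 0 := hden z hz1.le
    -- φ ∘ σ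
    have hs1 : σ z = (((starRingEnd ℂ) A)*z - ((starRingEnd ℂ) C))/(-((starRingEnd ℂ) B)*z + ((starRingEnd ℂ) D)) := hσ z
    have hnum : A * σ z + B = ((A*((starRingEnd ℂ) A) - B*((starRingEnd ℂ) B))*z + (B*((starRingEnd ℂ) D) - A*((starRingEnd ℂ) C)))/(-((starRingEnd ℂ) B)*z + ((starRingEnd ℂ) D)) := by
      have e : A*(((starRingEnd ℂ) A)*z - ((starRingEnd ℂ) C)) + B*(-((starRingEnd ℂ) B)*z + ((starRingEnd ℂ) D)) = (A*((starRingEnd ℂ) A) - B*((starRingEnd ℂ) B))*z + (B*((starRingEnd ℂ) D) - A*((starRingEnd ℂ) C)) := by ring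
      rw [hs1, ← mul_div_assoc, div_add' _ _ _ hdz1, e]
    have hdenm : -(((starRingEnd ℂ) B)*D - ((starRingEnd ℂ) A)*C)*z + ((N:ℝ):ℂ) ≠ 0 := by
      intro h0
      have h1 : (1+((b:ℝ):ℂ))*((N:ℝ):ℂ) = ((b:ℝ):ℂ)*((starRingEnd ℂ) η)*((N:ℝ):ℂ)*z := by
        linear_combination (1+((b:ℝ):ℂ))*h0 + z*hE1c
      have h2 : (1:ℂ)+((b:ℝ):ℂ) = ((b:ℝ):ℂ)*(((starRingEnd ℂ) η)*z) := by
        apply mul_right_cancel₀ hNC0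
        linear_combination h1
      have h3 := congrArg (fun x : ℂ => ‖x‖) h2
      simp only [norm_mul, Complex.norm_real, Real.norm_eq_abs, Complex.norm_conj, hη, one_mul] at h3
      rw [abs_of_pos hb] at h3
      have h4 : ‖(1:ℂ)+((b:ℝ):ℂ)‖ = 1+b := by
        rw [show (1:ℂ)+((b:ℝ):ℂ) = ((1+b:ℝ):ℂ) by push_cast; ring, Complex.norm_real, Real.norm_eq_abs,
          abs_of_pos (by linarith)]
      rw [h4] at h3
      nlinarith
    have hden2 : C * σ z + D = (-(((starRingEnd ℂ) B)*D - ((starRingEnd ℂ) A)*C)*z + ((N:ℝ):ℂ))/(-((starRingEnd ℂ) B)*z + ((starRingEnd ℂ) D)) := by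
      have e : C*(((starRingEnd ℂ) A)*z - ((starRingEnd ℂ) C)) + D*(-((starRingEnd ℂ) B)*z + ((starRingEnd ℂ) D)) = -(((starRingEnd ℂ) B)*D - ((starRingEnd ℂ) A)*C)*z + ((N:ℝ):ℂ) := by
        linear_combination -hNval
      rw [hs1, ← mul_div_assoc, div_add' _ _ _ hdz1, e]
    have hφσ : φ (σ z) = ((A*((starRingEnd ℂ) A) - B*((starRingEnd ℂ) B))*z + (B*((starRingEnd ℂ) D) - A*((starRingEnd ℂ) C)))/(-(((starRingEnd ℂ) B)*D - ((starRingEnd ℂ) A)*C)*z + ((N:ℝ):ℂ)) := by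
      rw [hφ (σ z), hnum, hden2, hdd _ _ _ hdz1 hdenm]
    have hrd : (2+((2*b:ℝ):ℂ))*η - ((2*b:ℝ):ℂ)*z ≠ 0 := by
      intro h0
      have h1 : ((2+2*b:ℝ):ℂ)*η = ((2*b:ℝ):ℂ)*z := by
        push_cast at h0 ⊢; linear_combination h0
      have h2 := congrArg (fun x : ℂ => ‖x‖) h1
      simp only [norm_mul, Complex.norm_real, Real.norm_eq_abs, hη, mul_one] at h2
      rw [abs_of_pos (by linarith : (0:ℝ) < 2+2*b), abs_of_pos (by norm_num : (0:ℝ) < 2), abs_of_pos hb] at h2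
      nlinarith
    constructor
    · rw [hφσ]
      rw [show rho η ((2*b:ℝ):ℂ) z = η * ((2 - ((2*b:ℝ):ℂ)) * z + ((2*b:ℝ):ℂ) * η) /
        ((2 + ((2*b:ℝ):ℂ)) * η - ((2*b:ℝ):ℂ) * z) from rfl]
      rw [div_eq_div_iff hdenm (by
        intro h0; exact hrd (by linear_combination h0))]
      apply mul_left_cancel₀ h1b
      push_cast
      linear_combination z*((2+2*((b:ℝ):ℂ))*η - 2*((b:ℝ):ℂ)*z)*hX + ((2+2*((b:ℝ):ℂ))*η - 2*((b:ℝ):ℂ)*z)*hE1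
        + η*((2-2*((b:ℝ):ℂ))*z + 2*((b:ℝ):ℂ)*η)*z*hE1c
        + ((N:ℝ):ℂ)*(2*((b:ℝ):ℂ)*(1-((b:ℝ):ℂ))*z^2 + 2*((b:ℝ):ℂ)^2*η*z)*hηC
    · -- σ ∘ φ
      have hnum3 : ((starRingEnd ℂ) A) * φ z - ((starRingEnd ℂ) C) = ((A*((starRingEnd ℂ) A) - C*((starRingEnd ℂ) C))*z + (((starRingEnd ℂ) A)*B - ((starRingEnd ℂ) C)*D))/(C*z + D) := by
        have e : ((starRingEnd ℂ) A)*(A*z + B) - (C*z + D)*((starRingEnd ℂ) C) = (A*((starRingEnd ℂ) A) - C*((starRingEnd ℂ) C))*z + (((starRingEnd ℂ) A)*B - ((starRingEnd ℂ) C)*D) := by ring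
        rw [hφ z, ← mul_div_assoc, div_sub' hdzφ, e]
      have hdenm3 : -(A*((starRingEnd ℂ) B) - C*((starRingEnd ℂ) D))*z + ((N':ℝ):ℂ) ≠ 0 := by
        intro h0
        have h1 : (1+((c:ℝ):ℂ))*((N':ℝ):ℂ) = ((c:ℝ):ℂ)*((starRingEnd ℂ) ζ)*((N':ℝ):ℂ)*z := by
          linear_combination (1+((c:ℝ):ℂ))*h0 + z*hE3c
        have h2 : (1:ℂ)+((c:ℝ):ℂ) = ((c:ℝ):ℂ)*(((starRingEnd ℂ) ζ)*z) := by
          apply mul_right_cancel₀ hNP0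
          linear_combination h1
        have h3 := congrArg (fun x : ℂ => ‖x‖) h2
        simp only [norm_mul, Complex.norm_real, Real.norm_eq_abs, Complex.norm_conj, hζ, one_mul] at h3
        rw [abs_of_pos hc] at h3
        have h4 : ‖(1:ℂ)+((c:ℝ):ℂ)‖ = 1+c := by
          rw [show (1:ℂ)+((c:ℝ):ℂ) = ((1+c:ℝ):ℂ) by push_cast; ring, Complex.norm_real, Real.norm_eq_abs,
            abs_of_pos (by linarith)]
        rw [h4] at h3
        nlinarith
      have hden3 : -((starRingEnd ℂ) B) * φ z + ((starRingEnd ℂ) D) = (-(A*((starRingEnd ℂ) B) - C*((starRingEnd ℂ) D))*z + ((N':ℝ):ℂ))/(C*z + D) := by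
        have e : -((starRingEnd ℂ) B)*(A*z + B) + ((starRingEnd ℂ) D)*(C*z + D) = -(A*((starRingEnd ℂ) B) - C*((starRingEnd ℂ) D))*z + ((N':ℝ):ℂ) := by
          linear_combination -hN'val
        rw [hφ z, ← mul_div_assoc, div_add' _ _ _ hdzφ, e]
      have hσφ : σ (φ z) = ((A*((starRingEnd ℂ) A) - C*((starRingEnd ℂ) C))*z + (((starRingEnd ℂ) A)*B - ((starRingEnd ℂ) C)*D))/(-(A*((starRingEnd ℂ) B) - C*((starRingEnd ℂ) D))*z + ((N':ℝ):ℂ)) := by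
        rw [hσ (φ z), hnum3, hden3, hdd _ _ _ hdzφ hdenm3]
      have hrd3 : (2+((2*c:ℝ):ℂ))*ζ - ((2*c:ℝ):ℂ)*z ≠ 0 := by
        intro h0
        have h1 : ((2+2*c:ℝ):ℂ)*ζ = ((2*c:ℝ):ℂ)*z := by
          push_cast at h0 ⊢; linear_combination h0
        have h2 := congrArg (fun x : ℂ => ‖x‖) h1
        simp only [norm_mul, Complex.norm_real, Real.norm_eq_abs, hζ, mul_one] at h2
        rw [abs_of_pos (by linarith : (0:ℝ) < 2+2*c), abs_of_pos (by norm_num : (0:ℝ) < 2), abs_of_pos hc] at h2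
        nlinarith
      rw [hσφ]
      rw [show rho ζ ((2*c:ℝ):ℂ) z = ζ * ((2 - ((2*c:ℝ):ℂ)) * z + ((2*c:ℝ):ℂ) * ζ) /
        ((2 + ((2*c:ℝ):ℂ)) * ζ - ((2*c:ℝ):ℂ) * z) from rfl]
      rw [div_eq_div_iff hdenm3 (by
        intro h0; exact hrd3 (by linear_combination h0))]
      apply mul_left_cancel₀ h1c
      push_cast
      linear_combination z*((2+2*((c:ℝ):ℂ))*ζ - 2*((c:ℝ):ℂ)*z)*hXp + ((2+2*((c:ℝ):ℂ))*ζ - 2*((c:ℝ):ℂ)*z)*hE3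
        + ζ*((2-2*((c:ℝ):ℂ))*z + 2*((c:ℝ):ℂ)*ζ)*z*hE3c
        + ((N':ℝ):ℂ)*(2*((c:ℝ):ℂ)*(1-((c:ℝ):ℂ))*z^2 + 2*((c:ℝ):ℂ)^2*ζ*z)*hζC
end

section
/- Let H be a complex Hilbert space, let m and n be positive integers, and let T and S be bounded linear operators on H such that T^m = S^n and such that S = A + K for some positive bounded operator A and some compact operator K on H. Let λ be real with 0 < λ ≤ 1 and set μ = λ^{m/n} (the real power). Suppose (f_k) is a sequence of unit vectors in H converging weakly to 0 such that ‖(T − λI)f_k‖ → 0 as k → ∞. Then ‖(S − μI)f_k‖ → 0 as k → ∞. -/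
open scoped InnerProductSpace
open Filter Topology ContinuousLinearMap

section Aux

variable {H : Type*} [NormedAddCommGroup H] [InnerProductSpace ℂ H] [CompleteSpace H]

/-- Powers of a positive operator are positive. -/
lemma aux_isPositive_pow {A : H →L[ℂ] H} (hA : A.IsPositive) : ∀ i : ℕ, (A ^ i).IsPositive := by
  intro i
  induction i using Nat.twoStepInduction with
  | zero => simpa using isPositive_one
  | one => simpa using hA
  | more n ih _ =>
    have hadj : ContinuousLinearMap.adjoint A = A := hA.isSelfAdjoint
    have h := (ih).conj_adjoint A
    rw [hadj] at h
    have heq : A ∘L (A ^ n) ∘L A = A ^ (n + 2) := by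
      show A * ((A ^ n) * A) = A ^ (n + 2)
      rw [← pow_succ, ← pow_succ']
    rwa [heq] at h

/-- A compact operator sends weakly null bounded sequences to norm-null sequences. -/
lemma aux_compact_weakNull (K : H →L[ℂ] H) (hK : IsCompactOperator (⇑K))
    (f : ℕ → H) (hb : ∀ k, ‖f k‖ ≤ 1)
    (hweak : ∀ y : H, Tendsto (fun k => (⟪f k, y⟫_ℂ : ℂ)) atTop (nhds 0)) :
    Tendsto (fun k => ‖K (f k)‖) atTop (nhds 0) := by
  have hK' : IsCompactOperator (⇑(K.toLinearMap)) := hK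
  have hM : IsCompact (closure (⇑K '' Metric.closedBall 0 1)) :=
    hK'.isCompact_closure_image_closedBall (𝕜₁ := ℂ) 1
  -- weak convergence of K (f k)
  have hwK : ∀ y : H, Tendsto (fun k => (⟪K (f k), y⟫_ℂ : ℂ)) atTop (nhds 0) := by
    intro y
    have := hweak (ContinuousLinearMap.adjoint K y)
    refine this.congr fun k => ?_
    rw [ContinuousLinearMap.adjoint_inner_right]
  apply Filter.tendsto_of_subseq_tendsto
  intro ns hns
  have hmem : ∀ k, K (f (ns k)) ∈ closure (⇑K '' Metric.closedBall 0 1) := fun k =>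
    subset_closure ⟨f (ns k), by simpa [Metric.mem_closedBall, dist_eq_norm] using hb (ns k), rfl⟩
  obtain ⟨a, _, φ, hφ, ha⟩ := hM.tendsto_subseq hmem
  have ha0 : a = 0 := by
    have hzero : ∀ y : H, (⟪a, y⟫_ℂ : ℂ) = 0 := by
      intro y
      have h1 : Tendsto (fun k => (⟪K (f (ns (φ k))), y⟫_ℂ : ℂ)) atTop (nhds ⟪a, y⟫_ℂ) :=
        (ha.inner tendsto_const_nhds : _)
      have h2 : Tendsto (fun k => (⟪K (f (ns (φ k))), y⟫_ℂ : ℂ)) atTop (nhds 0) :=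
        (hwK y).comp (hns.comp hφ.tendsto_atTop)
      exact tendsto_nhds_unique h1 h2
    have := hzero a
    rwa [inner_self_eq_zero] at this
  refine ⟨φ, ?_⟩
  have : Tendsto (fun k => ‖K (f (ns (φ k)))‖) atTop (nhds ‖a‖) :=
    (continuous_norm.tendsto a).comp ha
  rwa [ha0, norm_zero] at this

/-- Approximate eigenvectors for powers. -/
lemma aux_pow_approx (T : H →L[ℂ] H) (c : ℂ) (f : ℕ → H) (hb : ∀ k, ‖f k‖ ≤ 1)
    (h : Tendsto (fun k => ‖T (f k) - c • f k‖) atTop (nhds 0)) (m : ℕ) :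
    Tendsto (fun k => ‖(T ^ m) (f k) - c ^ m • f k‖) atTop (nhds 0) := by
  induction m with
  | zero => simpa using tendsto_const_nhds
  | succ m ih =>
    have key : ∀ k, ‖(T ^ (m + 1)) (f k) - c ^ (m + 1) • f k‖ ≤
        ‖T‖ * ‖(T ^ m) (f k) - c ^ m • f k‖ + ‖c‖ ^ m * ‖T (f k) - c • f k‖ := by
      intro k
      have e : (T ^ (m + 1)) (f k) - c ^ (m + 1) • f k =
          T ((T ^ m) (f k) - c ^ m • f k) + c ^ m • (T (f k) - c • f k) := by
        have h1 : (T ^ (m + 1)) (f k) = T ((T ^ m) (f k)) := by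
          rw [pow_succ', ContinuousLinearMap.mul_apply]
        rw [h1, pow_succ, map_sub, map_smul, smul_sub]
        module
      rw [e]
      calc ‖T ((T ^ m) (f k) - c ^ m • f k) + c ^ m • (T (f k) - c • f k)‖
          ≤ ‖T ((T ^ m) (f k) - c ^ m • f k)‖ + ‖c ^ m • (T (f k) - c • f k)‖ := norm_add_le _ _
        _ ≤ ‖T‖ * ‖(T ^ m) (f k) - c ^ m • f k‖ + ‖c‖ ^ m * ‖T (f k) - c • f k‖ := by
            gcongr
            · exact T.le_opNorm _
            · rw [norm_smul, norm_pow]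
    have hlim : Tendsto (fun k => ‖T‖ * ‖(T ^ m) (f k) - c ^ m • f k‖ +
        ‖c‖ ^ m * ‖T (f k) - c • f k‖) atTop (nhds 0) := by
      have := (ih.const_mul ‖T‖).add (h.const_mul (‖c‖ ^ m))
      simpa using this
    exact squeeze_zero (fun k => norm_nonneg _) key hlim

/-- $(A+K)^n - A^n$ is compact when $K$ is compact. -/
lemma aux_compact_diff (A K : H →L[ℂ] H) (hK : IsCompactOperator (⇑K)) (n : ℕ) :
    IsCompactOperator (⇑((A + K) ^ n - A ^ n)) := by
  induction n with
  | zero => simpa using isCompactOperator_zero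
  | succ n ih =>
    have e : (A + K) ^ (n + 1) - A ^ (n + 1) =
        ((A + K) ^ n - A ^ n) * A + (A + K) ^ n * K := by
      noncomm_ring
    rw [e]
    have h1 : IsCompactOperator (⇑(((A + K) ^ n - A ^ n) * A)) := by
      have := ih.comp_clm A
      exact this
    have h2 : IsCompactOperator (⇑((A + K) ^ n * K)) := by
      have := hK.clm_comp ((A + K) ^ n)
      exact this
    have := h1.add h2
    rw [ContinuousLinearMap.coe_add']; exact this

/-- Quantitative bound: for a positive operator and $\mu>0$. -/
lemma aux_pos_bound {A : H →L[ℂ] H} (hA : A.IsPositive) {mu : ℝ} (hmu : 0 < mu)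
    (n : ℕ) (hn : 1 ≤ n) (g : H) :
    mu ^ (n - 1) * ‖A g - (mu : ℂ) • g‖ ≤ ‖(A ^ n) g - ((mu : ℂ)) ^ n • g‖ := by
  set B : H →L[ℂ] H := (mu : ℂ) • 1 with hB
  have hcomm : Commute A B := (Commute.one_right A).smul_right (mu : ℂ)
  have hgeom := hcomm.geom_sum₂_mul n
  set h : H := A g - (mu : ℂ) • g with hh
  have hBg : A g - B g = h := by rw [hh, hB]; simp
  have hBpow : ∀ k : ℕ, B ^ k = ((mu : ℂ) ^ k) • 1 := by
    intro k
    rw [hB, smul_pow, one_pow]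
  -- (A^n - B^n) g = P h
  have hBng : (B ^ n) g = ((mu : ℂ)) ^ n • g := by rw [hBpow]; simp
  have hPn : (A ^ n) g - ((mu : ℂ)) ^ n • g =
      (∑ i ∈ Finset.range n, A ^ i * B ^ (n - 1 - i)) h := by
    have happ := congrArg (fun (X : H →L[ℂ] H) => X g) hgeom
    simp only [ContinuousLinearMap.mul_apply, ContinuousLinearMap.sub_apply] at happ
    rw [hBg, hBng] at happ
    exact happ.symm
  -- lower bound on re inner
  have hlow : mu ^ (n - 1) * ‖h‖ ^ 2 ≤
      Complex.re ⟪(∑ i ∈ Finset.range n, A ^ i * B ^ (n - 1 - i)) h, h⟫_ℂ := by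
    have hsum : Complex.re ⟪(∑ i ∈ Finset.range n, A ^ i * B ^ (n - 1 - i)) h, h⟫_ℂ =
        ∑ i ∈ Finset.range n, mu ^ (n - 1 - i) * Complex.re ⟪(A ^ i) h, h⟫_ℂ := by
      rw [ContinuousLinearMap.sum_apply, sum_inner, Complex.re_sum]
      refine Finset.sum_congr rfl fun i _ => ?_
      rw [ContinuousLinearMap.mul_apply, hBpow]
      simp only [ContinuousLinearMap.smul_apply, ContinuousLinearMap.one_apply, map_smul,
        inner_smul_left, ← Complex.ofReal_pow, Complex.conj_ofReal]
      rw [Complex.re_ofReal_mul]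
    rw [hsum]
    have hterm : ∀ i ∈ Finset.range n, (0 : ℝ) ≤ mu ^ (n - 1 - i) * Complex.re ⟪(A ^ i) h, h⟫_ℂ :=
      fun i _ => mul_nonneg (pow_nonneg hmu.le _) ((aux_isPositive_pow hA i).re_inner_nonneg_left h)
    have h0 : (0 : ℕ) ∈ Finset.range n := Finset.mem_range.2 hn
    have := Finset.single_le_sum hterm h0
    calc mu ^ (n - 1) * ‖h‖ ^ 2 = mu ^ (n - 1 - 0) * Complex.re ⟪(A ^ 0) h, h⟫_ℂ := by
          rw [pow_zero, ContinuousLinearMap.one_apply, Nat.sub_zero]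
          congr 1
          exact (inner_self_eq_norm_sq (𝕜 := ℂ) h).symm
      _ ≤ _ := this
  -- upper bound via Cauchy-Schwarz
  have hup : Complex.re ⟪(A ^ n) g - ((mu : ℂ)) ^ n • g, h⟫_ℂ ≤
      ‖(A ^ n) g - ((mu : ℂ)) ^ n • g‖ * ‖h‖ := by
    calc Complex.re ⟪(A ^ n) g - ((mu : ℂ)) ^ n • g, h⟫_ℂ
        ≤ ‖(⟪(A ^ n) g - ((mu : ℂ)) ^ n • g, h⟫_ℂ : ℂ)‖ := Complex.re_le_norm _
      _ ≤ ‖(A ^ n) g - ((mu : ℂ)) ^ n • g‖ * ‖h‖ := norm_inner_le_norm _ _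
  have hkey : mu ^ (n - 1) * ‖h‖ ^ 2 ≤ ‖(A ^ n) g - ((mu : ℂ)) ^ n • g‖ * ‖h‖ := by
    calc mu ^ (n - 1) * ‖h‖ ^ 2
        ≤ Complex.re ⟪(∑ i ∈ Finset.range n, A ^ i * B ^ (n - 1 - i)) h, h⟫_ℂ := hlow
      _ = Complex.re ⟪(A ^ n) g - ((mu : ℂ)) ^ n • g, h⟫_ℂ := by rw [hPn]
      _ ≤ _ := hup
  rcases eq_or_ne h 0 with h0 | h0
  · rw [h0, norm_zero, mul_zero]
    exact norm_nonneg _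
  · have hpos : 0 < ‖h‖ := norm_pos_iff.2 h0
    exact le_of_mul_le_mul_right (by nlinarith [hkey] :
      mu ^ (n - 1) * ‖h‖ * ‖h‖ ≤ ‖(A ^ n) g - ((mu : ℂ)) ^ n • g‖ * ‖h‖) hpos

end Aux

theorem stmt_3 {H : Type*} [NormedAddCommGroup H] [InnerProductSpace ℂ H] [CompleteSpace H]
    (m n : ℕ) (hm : 1 ≤ m) (hn : 1 ≤ n)
    (T S : H →L[ℂ] H) (hTS : T ^ m = S ^ n)
    (A K : H →L[ℂ] H) (hA : A.IsPositive) (hK : IsCompactOperator K) (hS : S = A + K)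
    (lam : ℝ) (hlam0 : 0 < lam) (hlam1 : lam ≤ 1)
    (mu : ℝ) (hmu : mu = lam ^ ((m : ℝ) / (n : ℝ)))
    (f : ℕ → H) (hf : ∀ k, ‖f k‖ = 1)
    (hweak : ∀ y : H, Filter.Tendsto (fun k => (⟪f k, y⟫_ℂ : ℂ)) Filter.atTop (nhds 0))
    (hT : Filter.Tendsto (fun k => ‖T (f k) - (lam : ℂ) • f k‖) Filter.atTop (nhds 0)) :
    Filter.Tendsto (fun k => ‖S (f k) - (mu : ℂ) • f k‖) Filter.atTop (nhds 0) := by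
  have hb : ∀ k, ‖f k‖ ≤ 1 := fun k => (hf k).le
  have hnne : (n : ℝ) ≠ 0 := Nat.cast_ne_zero.2 (by omega)
  have hmupos : 0 < mu := by
    rw [hmu]; exact Real.rpow_pos_of_pos hlam0 _
  have hmun : mu ^ n = lam ^ m := by
    rw [hmu, ← Real.rpow_natCast (lam ^ ((m : ℝ) / (n : ℝ))) n, ← Real.rpow_natCast lam m,
      ← Real.rpow_mul hlam0.le, div_mul_cancel₀ _ hnne]
  have hmunC : ((mu : ℂ)) ^ n = ((lam : ℂ)) ^ m := by
    rw [← Complex.ofReal_pow, ← Complex.ofReal_pow, hmun]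
  -- step 1: S^n f_k - mu^n f_k → 0
  have hTn : Tendsto (fun k => ‖(T ^ m) (f k) - ((lam : ℂ)) ^ m • f k‖) atTop (nhds 0) :=
    aux_pow_approx T (lam : ℂ) f hb hT m
  have hSn : Tendsto (fun k => ‖(S ^ n) (f k) - ((mu : ℂ)) ^ n • f k‖) atTop (nhds 0) := by
    rw [← hTS, hmunC]; exact hTn
  -- step 2: compactness results
  have hK' : IsCompactOperator (⇑(S ^ n - A ^ n)) := by
    rw [hS]; exact aux_compact_diff A K hK n
  have hKf : Tendsto (fun k => ‖K (f k)‖) atTop (nhds 0) :=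
    aux_compact_weakNull K hK f hb hweak
  have hK'f : Tendsto (fun k => ‖(S ^ n - A ^ n) (f k)‖) atTop (nhds 0) :=
    aux_compact_weakNull _ hK' f hb hweak
  -- step 3: A^n f_k - mu^n f_k → 0
  have hAn : Tendsto (fun k => ‖(A ^ n) (f k) - ((mu : ℂ)) ^ n • f k‖) atTop (nhds 0) := by
    have bound : ∀ k, ‖(A ^ n) (f k) - ((mu : ℂ)) ^ n • f k‖ ≤
        ‖(S ^ n) (f k) - ((mu : ℂ)) ^ n • f k‖ + ‖(S ^ n - A ^ n) (f k)‖ := by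
      intro k
      have e : (A ^ n) (f k) - ((mu : ℂ)) ^ n • f k =
          ((S ^ n) (f k) - ((mu : ℂ)) ^ n • f k) - (S ^ n - A ^ n) (f k) := by
        simp only [ContinuousLinearMap.sub_apply]; abel
      rw [e]
      exact norm_sub_le _ _
    have hlim := hSn.add hK'f
    rw [add_zero] at hlim
    exact squeeze_zero (fun k => norm_nonneg _) bound hlim
  -- step 4: A f_k - mu f_k → 0
  have hAf : Tendsto (fun k => ‖A (f k) - (mu : ℂ) • f k‖) atTop (nhds 0) := by
    have bound : ∀ k, ‖A (f k) - (mu : ℂ) • f k‖ ≤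
        (mu ^ (n - 1))⁻¹ * ‖(A ^ n) (f k) - ((mu : ℂ)) ^ n • f k‖ := by
      intro k
      have hpos : 0 < mu ^ (n - 1) := pow_pos hmupos _
      have := aux_pos_bound hA hmupos n hn (f k)
      rw [le_inv_mul_iff₀ hpos]
      linarith [this]
    have hlim := hAn.const_mul (mu ^ (n - 1))⁻¹
    rw [mul_zero] at hlim
    exact squeeze_zero (fun k => norm_nonneg _) bound hlim
  -- step 5: conclude
  have bound : ∀ k, ‖S (f k) - (mu : ℂ) • f k‖ ≤
      ‖A (f k) - (mu : ℂ) • f k‖ + ‖K (f k)‖ := by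
    intro k
    have e : S (f k) - (mu : ℂ) • f k = (A (f k) - (mu : ℂ) • f k) + K (f k) := by
      rw [hS]; simp only [ContinuousLinearMap.add_apply]; abel
    rw [e]
    exact norm_add_le _ _
  have hlim := hAf.add hKf
  rw [add_zero] at hlim
  exact squeeze_zero (fun k => norm_nonneg _) bound hlim
end

section
/- Let φ(z) = (Az+B)/(Cz+D) with AD−BC ≠ 0 be a linear-fractional map whose denominator does not vanish on the closed unit disk, which maps 𝔻 into 𝔻 but not onto 𝔻, and suppose φ(ζ) = η for distinct points ζ, η ∈ ∂𝔻. Let ψ(z) = (A'z+B')/(C'z+D') with A'D'−B'C' ≠ 0 be a linear-fractional map whose denominator does not vanish on the closed unit disk, mapping 𝔻 into 𝔻, with ψ(ζ) = η, ψ'(ζ) = φ'(ζ), and ψ(𝔻) a proper subset of φ(𝔻). Then there exists a ∈ ℂ with Re a > 0 such that ψ(z) = φ(ρ_{ζ,a}(z)) for every z ∈ 𝔻. -/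
open Complex

private lemma normSq_key (a ζ z : ℂ) (hζ : Complex.normSq ζ = 1) :
    Complex.normSq ((2 + a) * ζ - a * z)
      = Complex.normSq (ζ * ((2 - a) * z + a * ζ)) + 4 * (1 - Complex.normSq z)
        + 2 * a.re * (2 * Complex.normSq (ζ - z)) := by
  have hz1 : ζ * (starRingEnd ℂ) ζ = 1 := by
    rw [Complex.mul_conj, hζ]; norm_num
  have key : ((2 + a) * ζ - a * z) * (starRingEnd ℂ) ((2 + a) * ζ - a * z)
      = (ζ * ((2 - a) * z + a * ζ)) * (starRingEnd ℂ) (ζ * ((2 - a) * z + a * ζ))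
        + 4 * (1 - z * (starRingEnd ℂ) z)
        + (a + (starRingEnd ℂ) a) * (2 * ((ζ - z) * (starRingEnd ℂ) (ζ - z))) := by
    simp only [map_sub, map_add, map_mul, map_ofNat]
    linear_combination (4 - a * (starRingEnd ℂ) a * ζ * (starRingEnd ℂ) ζ
      - 2 * (starRingEnd ℂ) z * a * ζ + (starRingEnd ℂ) z * a * (starRingEnd ℂ) a * ζ
      - 2 * z * (starRingEnd ℂ) a * (starRingEnd ℂ) ζ
      + z * a * (starRingEnd ℂ) a * (starRingEnd ℂ) ζ
      - 4 * z * (starRingEnd ℂ) z + 2 * z * (starRingEnd ℂ) z * (starRingEnd ℂ) a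
      + 2 * z * (starRingEnd ℂ) z * a - z * (starRingEnd ℂ) z * a * (starRingEnd ℂ) a) * hz1
  rw [Complex.mul_conj, Complex.mul_conj, Complex.mul_conj, Complex.mul_conj,
    Complex.add_conj] at key
  exact_mod_cast key

/-- If `Re a ≥ 0`, `|ζ| = 1`, `|z| < 1`, then the denominator of `rho` is nonzero
and `|rho ζ a z| < 1`. -/
private lemma rho_good (a ζ z : ℂ) (ha : 0 ≤ a.re) (hζ : ‖ζ‖ = 1)
    (hz : ‖z‖ < 1) :
    (2 + a) * ζ - a * z ≠ 0 ∧ ‖rho ζ a z‖ < 1 := by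
  have hnζ : Complex.normSq ζ = 1 := by
    rw [← Complex.sq_norm, hζ]; norm_num
  have hnz : Complex.normSq z < 1 := by
    rw [← Complex.sq_norm]
    nlinarith [norm_nonneg z]
  have key := normSq_key a ζ z hnζ
  have h1 : Complex.normSq (ζ * ((2 - a) * z + a * ζ)) < Complex.normSq ((2 + a) * ζ - a * z) := by
    nlinarith [Complex.normSq_nonneg (ζ - z), Complex.normSq_nonneg (ζ * ((2 - a) * z + a * ζ))]
  have hden : (2 + a) * ζ - a * z ≠ 0 := by
    intro h
    rw [h] at h1
    simp only [Complex.normSq_zero] at h1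
    nlinarith [Complex.normSq_nonneg (ζ * ((2 - a) * z + a * ζ))]
  refine ⟨hden, ?_⟩
  rw [rho, norm_div]
  rw [div_lt_one (norm_pos_iff.mpr hden)]
  have := norm_nonneg (ζ * ((2 - a) * z + a * ζ))
  have := norm_nonneg ((2 + a) * ζ - a * z)
  rw [← Complex.sq_norm, ← Complex.sq_norm] at h1
  nlinarith

private lemma deriv_lft (A B C D z : ℂ) (h : C * z + D ≠ 0) :
    deriv (fun w => (A * w + B) / (C * w + D)) z = (A * D - B * C) / (C * z + D) ^ 2 := by
  have h1 : HasDerivAt (fun w : ℂ => A * w + B) A z := by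
    simpa using ((hasDerivAt_id z).const_mul A).add_const B
  have h2 : HasDerivAt (fun w : ℂ => C * w + D) C z := by
    simpa using ((hasDerivAt_id z).const_mul C).add_const D
  rw [show (fun w => (A * w + B) / (C * w + D)) = (fun w => A * w + B) / (fun w => C * w + D) from rfl, (h1.div h2 h).deriv]
  congr 1
  ring

theorem stmt_4 (A B C D A' B' C' D' : ℂ)
    (hdet : A * D - B * C ≠ 0) (hdet' : A' * D' - B' * C' ≠ 0)
    (φ ψ : ℂ → ℂ)
    (hφ : ∀ z, φ z = (A * z + B) / (C * z + D))
    (hψ : ∀ z, ψ z = (A' * z + B') / (C' * z + D'))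
    (hden : ∀ z : ℂ, ‖z‖ ≤ 1 → C * z + D ≠ 0)
    (hden' : ∀ z : ℂ, ‖z‖ ≤ 1 → C' * z + D' ≠ 0)
    (hmaps : ∀ z : ℂ, ‖z‖ < 1 → ‖φ z‖ < 1)
    (hnotonto : φ '' Metric.ball 0 1 ≠ Metric.ball 0 1)
    (hmaps' : ∀ z : ℂ, ‖z‖ < 1 → ‖ψ z‖ < 1)
    (ζ η : ℂ) (hζ : ‖ζ‖ = 1) (hη : ‖η‖ = 1) (hne : ζ ≠ η)
    (hφζ : φ ζ = η) (hψζ : ψ ζ = η) (hder : deriv ψ ζ = deriv φ ζ)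
    (hsub : ψ '' Metric.ball 0 1 ⊂ φ '' Metric.ball 0 1) :
    ∃ a : ℂ, 0 < a.re ∧ ∀ z ∈ Metric.ball (0 : ℂ) 1, ψ z = φ (rho ζ a z) := by
  -- basic facts
  have hζ0 : ζ ≠ 0 := by
    intro h; rw [h] at hζ; simp at hζ
  have hCζ : C * ζ + D ≠ 0 := hden ζ (le_of_eq hζ)
  have hC'ζ : C' * ζ + D' ≠ 0 := hden' ζ (le_of_eq hζ)
  -- boundary relation
  have e1 : A * ζ + B = η * (C * ζ + D) := by
    rw [hφ ζ] at hφζ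
    field_simp at hφζ
    rw [div_eq_iff (by rw [mul_comm]; exact hCζ)] at hφζ
    linear_combination hφζ
  have e2 : A' * ζ + B' = η * (C' * ζ + D') := by
    rw [hψ ζ] at hψζ
    field_simp at hψζ
    rw [div_eq_iff (by rw [mul_comm]; exact hC'ζ)] at hψζ
    linear_combination hψζ
  -- derivative relation
  have hφfun : φ = fun w => (A * w + B) / (C * w + D) := funext hφ
  have hψfun : ψ = fun w => (A' * w + B') / (C' * w + D') := funext hψ
  have e3 : (A' * D' - B' * C') * (C * ζ + D) ^ 2 = (A * D - B * C) * (C' * ζ + D') ^ 2 := by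
    rw [hφfun, hψfun] at hder
    rw [deriv_lft A B C D ζ hCζ, deriv_lft A' B' C' D' ζ hC'ζ] at hder
    rw [div_eq_div_iff (pow_ne_zero 2 hC'ζ) (pow_ne_zero 2 hCζ)] at hder
    exact hder
  have E : (A * ζ + B) * (C' * ζ + D') = (A' * ζ + B') * (C * ζ + D) := by
    rw [e1, e2]; ring
  -- the matrix N = adj(M_φ) * M_ψ
  set s := (A * D' - C * B') + (A * C' - C * A') * ζ with hs_def
  have hsX : s * (C * ζ + D) = (A * D - B * C) * (C' * ζ + D') := by
    rw [hs_def]; linear_combination C * E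
  have hs : s ≠ 0 := by
    intro h
    rw [h, zero_mul] at hsX
    exact mul_ne_zero hdet hC'ζ hsX.symm
  have h4 : s ^ 2 * (C * ζ + D) ^ 2
      = ((A * D - B * C) * (A' * D' - B' * C')) * (C * ζ + D) ^ 2 := by
    linear_combination (s * (C * ζ + D) + (A * D - B * C) * (C' * ζ + D')) * hsX
      - (A * D - B * C) * e3
  have hii : (D * A' - B * C') * (A * D' - C * B') - (D * B' - B * D') * (A * C' - C * A')
      = s ^ 2 := by
    have h5 : s ^ 2 = (A * D - B * C) * (A' * D' - B' * C') :=
      mul_right_cancel₀ (pow_ne_zero 2 hCζ) h4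
    rw [h5]; ring
  have hF1 : (A * C' - C * A') * ζ ^ 2
      + ((A * D' - C * B') - (D * A' - B * C')) * ζ - (D * B' - B * D') = 0 := by
    linear_combination E
  have hfact : ((A * D' - C * B') - (D * A' - B * C') + 2 * (A * C' - C * A') * ζ) * s = 0 := by
    rw [hs_def]
    linear_combination (A * C' - C * A') * hF1 - hii
  have h1 : (A * D' - C * B') - (D * A' - B * C') = -2 * (A * C' - C * A') * ζ := by
    rcases mul_eq_zero.mp hfact with h | h
    · linear_combination h
    · exact absurd h hs
  have h2 : (D * B' - B * D') = -(A * C' - C * A') * ζ ^ 2 := by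
    linear_combination ζ * h1 - hF1
  -- define a and μ
  set a := -(2 * ζ * (A * C' - C * A')) / s with ha_def
  set μ := 2 * ζ * (A * D - B * C) / s with hμ_def
  have ha_s : a * s = -(2 * ζ * (A * C' - C * A')) := div_mul_cancel₀ _ hs
  have hμ_s : μ * s = 2 * ζ * (A * D - B * C) := div_mul_cancel₀ _ hs
  have hμ : μ ≠ 0 := by
    intro h
    rw [h, zero_mul] at hμ_s
    exact mul_ne_zero (mul_ne_zero two_ne_zero hζ0) hdet hμ_s.symm
  clear_value s a μ
  -- the key pointwise identity
  have L1 : ∀ z : ℂ, A * (ζ * ((2 - a) * z + a * ζ)) + B * ((2 + a) * ζ - a * z)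
      = μ * (A' * z + B') := by
    intro z
    have : s * (A * (ζ * ((2 - a) * z + a * ζ)) + B * ((2 + a) * ζ - a * z))
        = s * (μ * (A' * z + B')) := by
      rw [hs_def] at ha_s hμ_s ⊢
      linear_combination (A * ζ ^ 2 - A * ζ * z + B * ζ - B * z) * ha_s
        - (A' * z + B') * hμ_s + (2 * ζ * A * z) * h1 - (2 * ζ * A) * h2
    exact mul_left_cancel₀ hs this
  have L2 : ∀ z : ℂ, C * (ζ * ((2 - a) * z + a * ζ)) + D * ((2 + a) * ζ - a * z)
      = μ * (C' * z + D') := by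
    intro z
    have : s * (C * (ζ * ((2 - a) * z + a * ζ)) + D * ((2 + a) * ζ - a * z))
        = s * (μ * (C' * z + D')) := by
      rw [hs_def] at ha_s hμ_s ⊢
      linear_combination (C * ζ ^ 2 - C * ζ * z + D * ζ - D * z) * ha_s
        - (C' * z + D') * hμ_s + (2 * ζ * C * z) * h1 - (2 * ζ * C) * h2
    exact mul_left_cancel₀ hs this
  -- ψ z = φ (rho ζ a z) whenever the rho-denominator is nonzero
  have psi_eq : ∀ z : ℂ, (2 + a) * ζ - a * z ≠ 0 → ψ z = φ (rho ζ a z) := by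
    intro z hd
    rw [hψ z, hφ (rho ζ a z), rho]
    set n := ζ * ((2 - a) * z + a * ζ) with hn_def
    set d := (2 + a) * ζ - a * z with hd_def
    have hAn : A * (n / d) + B = (A * n + B * d) / d := by field_simp
    have hCn : C * (n / d) + D = (C * n + D * d) / d := by field_simp
    rw [hAn, hCn, div_div_div_cancel_right₀ hd]
    rw [L1 z, L2 z]
    rw [mul_div_mul_left _ _ hμ]
  have mem_ball_iff : ∀ w : ℂ, w ∈ Metric.ball (0 : ℂ) 1 ↔ ‖w‖ < 1 := by
    intro w; rw [Metric.mem_ball, dist_zero_right]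
  -- injectivity of φ on the closed disk
  have inj : ∀ u v : ℂ, ‖u‖ ≤ 1 → ‖v‖ ≤ 1 → φ u = φ v → u = v := by
    intro u v hu hv h
    rw [hφ u, hφ v, div_eq_div_iff (hden u hu) (hden v hv)] at h
    have h' : (A * D - B * C) * (u - v) = 0 := by linear_combination h
    rcases mul_eq_zero.mp h' with h'' | h''
    · exact absurd h'' hdet
    · exact sub_eq_zero.mp h''
  -- Re a ≥ 0
  have hre : 0 ≤ a.re := by
    by_contra hre'
    push_neg at hre'
    set w : ℝ := -a.re with hw_def
    have hw : 0 < w := by rw [hw_def]; linarith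
    have hw1 : (w : ℂ) + 1 ≠ 0 := by
      intro h
      have h' := congrArg Complex.re h
      simp only [Complex.add_re, Complex.ofReal_re, Complex.one_re, Complex.zero_re] at h'
      linarith
    set z₀ := ζ * ((w : ℂ) - 1) / ((w : ℂ) + 1) with hz₀
    have habs_z₀ : ‖z₀‖ < 1 := by
      rw [hz₀, norm_div, norm_mul, hζ, one_mul, div_lt_one (norm_pos_iff.mpr hw1)]
      have h1 : ((w : ℂ) - 1) = ((w - 1 : ℝ) : ℂ) := by push_cast; ring
      have h2 : ((w : ℂ) + 1) = ((w + 1 : ℝ) : ℂ) := by push_cast; ring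
      rw [h1, h2, Complex.norm_real, Complex.norm_real, Real.norm_eq_abs, Real.norm_eq_abs]
      rcases abs_cases (w - 1) with ⟨h3, h4⟩ | ⟨h3, h4⟩ <;>
        rcases abs_cases (w + 1) with ⟨h5, h6⟩ | ⟨h5, h6⟩ <;> linarith
    have hq : ((w : ℂ) + a + 1) ≠ 0 := by
      intro h
      have h' := congrArg Complex.re h
      simp only [Complex.add_re, Complex.ofReal_re, Complex.one_re, Complex.zero_re] at h'
      rw [hw_def] at h'
      linarith
    have hden0 : (2 + a) * ζ - a * z₀ ≠ 0 := by
      have expand : (2 + a) * ζ - a * z₀ = ζ * (2 * ((w : ℂ) + a + 1)) / ((w : ℂ) + 1) := by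
        rw [hz₀]; field_simp; ring
      rw [expand]
      exact div_ne_zero (mul_ne_zero hζ0 (mul_ne_zero two_ne_zero hq)) hw1
    have hu_eq : rho ζ a z₀ = ζ * ((w : ℂ) + a - 1) / ((w : ℂ) + a + 1) := by
      rw [rho, div_eq_div_iff hden0 hq, hz₀]
      field_simp
      ring
    have habs_u : ‖rho ζ a z₀‖ = 1 := by
      rw [hu_eq, norm_div, norm_mul, hζ, one_mul, div_eq_one_iff_eq (norm_ne_zero_iff.mpr hq)]
      have h0 : ((w : ℂ) + a).re = 0 := by
        simp only [Complex.add_re, Complex.ofReal_re]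
        rw [hw_def]; ring
      have hnsq : Complex.normSq ((w : ℂ) + a - 1) = Complex.normSq ((w : ℂ) + a + 1) := by
        simp only [Complex.normSq_apply, Complex.sub_re, Complex.sub_im, Complex.add_re,
          Complex.add_im, Complex.one_re, Complex.one_im, h0]
        ring
      rw [Complex.norm_def, Complex.norm_def, hnsq]
    have hψz₀ := psi_eq z₀ hden0
    have hlt := hmaps' z₀ habs_z₀
    obtain ⟨v, hv, hφv⟩ := hsub.1 ⟨z₀, (mem_ball_iff z₀).2 habs_z₀, rfl⟩
    have hvabs : ‖v‖ < 1 := (mem_ball_iff v).1 hv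
    have huv : rho ζ a z₀ = v :=
      inj _ _ (le_of_eq habs_u) (le_of_lt hvabs) (by rw [← hψz₀, hφv])
    rw [huv] at habs_u
    exact (ne_of_lt hvabs) habs_u
  -- a ≠ 0
  have hane : a ≠ 0 := by
    intro h0
    have heq : ∀ z : ℂ, ψ z = φ z := by
      intro z
      have hd : (2 + a) * ζ - a * z ≠ 0 := by
        rw [h0]
        simpa using mul_ne_zero two_ne_zero hζ0
      have hrho0 : rho ζ (0 : ℂ) z = z := by
        rw [rho]; field_simp; ring
      have h' := psi_eq z hd
      rw [h0] at h'
      rw [h', hrho0]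
    exact hsub.2 (fun x hx => by
      obtain ⟨v, hv, rfl⟩ := hx
      exact ⟨v, hv, heq v⟩)
  -- Re a ≠ 0
  have hre0 : a.re ≠ 0 := by
    intro h0
    apply hsub.2
    rintro x ⟨v, hv, rfl⟩
    have hvabs : ‖v‖ < 1 := (mem_ball_iff v).1 hv
    have hna : (0 : ℝ) ≤ (-a).re := by
      rw [Complex.neg_re, h0]; norm_num
    obtain ⟨hdna, habs⟩ := rho_good (-a) ζ v hna hζ hvabs
    refine ⟨rho ζ (-a) v, (mem_ball_iff _).2 habs, ?_⟩
    obtain ⟨hd2, _⟩ := rho_good a ζ (rho ζ (-a) v) hre hζ habs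
    rw [psi_eq _ hd2]
    congr 1
    have hm : rho ζ (-a) v * ((2 + -a) * ζ - -a * v) = ζ * ((2 - -a) * v + -a * ζ) := by
      rw [rho]; exact div_mul_cancel₀ _ hdna
    rw [rho, div_eq_iff hd2]
    linear_combination hm
  exact ⟨a, lt_of_le_of_ne hre (Ne.symm hre0), fun z hz => by
    obtain ⟨hd, _⟩ := rho_good a ζ z hre hζ ((mem_ball_iff z).1 hz)
    exact psi_eq z hd⟩
end

section
/- Let φ(z) = (Az+B)/(Cz+D) with AD−BC ≠ 0 be a linear-fractional map whose denominator does not vanish on the closed unit disk, which maps 𝔻 into 𝔻 but not onto 𝔻, and suppose φ(ζ) = η for distinct points ζ, η ∈ ∂𝔻. Let b > 0 be real with ρ_{η,b}(𝔻) = φ(𝔻). Let ψ(z) = (A'z+B')/(C'z+D') with A'D'−B'C' ≠ 0 be a linear-fractional map whose denominator does not vanish on the closed unit disk. Then the following are equivalent: (i) ψ maps 𝔻 into 𝔻 but not onto 𝔻, ψ(ζ) = η, and ψ'(ζ) = φ'(ζ); (ii) there exists a ∈ ℂ with Re a > −b such that ψ(z) = ρ_{η,a}(φ(z)) for every z ∈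 𝔻. -/
lemma div_div_cancel'' (x y d : ℂ) (hd : d ≠ 0) : x / d / (y / d) = x / y := by
  rcases eq_or_ne y 0 with rfl | hy
  · simp
  · field_simp

lemma TS {η u : ℂ} (hη0 : η ≠ 0) (hu1 : u + 1 ≠ 0) :
    (η + η * (u - 1) / (u + 1)) / (η - η * (u - 1) / (u + 1)) = u := by
  have h1 : η + η * (u - 1) / (u + 1) = (2 * η * u) / (u + 1) := by field_simp; ring
  have h2 : η - η * (u - 1) / (u + 1) = (2 * η) / (u + 1) := by field_simp; ring
  rw [h1, h2, div_div_cancel'' _ _ _ hu1]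
  exact mul_div_cancel_left₀ u (mul_ne_zero two_ne_zero hη0)

lemma STl {η w : ℂ} (hη0 : η ≠ 0) (hw : η - w ≠ 0) :
    η * ((η + w) / (η - w) - 1) / ((η + w) / (η - w) + 1) = w := by
  have h1 : (η + w) / (η - w) - 1 = (2 * w) / (η - w) := by field_simp; ring
  have h2 : (η + w) / (η - w) + 1 = (2 * η) / (η - w) := by field_simp; ring
  rw [h1, h2, ← mul_div_assoc, div_div_cancel'' _ _ _ hw]
  rw [show η * (2 * w) = (2 * η) * w by ring,
    mul_div_cancel_left₀ w (mul_ne_zero two_ne_zero hη0)]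

lemma rho_eq {η a z : ℂ} (hsub : η - z ≠ 0) :
    rho η a z = η * ((η + z) / (η - z) + a - 1) / ((η + z) / (η - z) + a + 1) := by
  have h1 : (η + z) / (η - z) + a - 1 = (a * η + (2 - a) * z) / (η - z) := by field_simp; ring
  have h2 : (η + z) / (η - z) + a + 1 = ((2 + a) * η - a * z) / (η - z) := by field_simp; ring
  rw [h1, h2, ← mul_div_assoc, div_div_cancel'' _ _ _ hsub, rho]
  congr 1
  ring

lemma reT {η z : ℂ} (hη : ‖η‖ = 1) (hz : ‖z‖ < 1) :
    0 < ((η + z) / (η - z)).re := by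
  have hne : η - z ≠ 0 := sub_ne_zero.2 (by rintro rfl; exact absurd hη (ne_of_lt hz))
  have h1 : 0 < Complex.normSq (η - z) := Complex.normSq_pos.2 hne
  have hη2 : η.re ^ 2 + η.im ^ 2 = 1 := by
    have h := congrArg (fun x : ℝ => x ^ 2) hη
    simp only [Complex.sq_norm, Complex.normSq_apply, one_pow] at h
    simpa [pow_two] using h
  have hz2 : z.re ^ 2 + z.im ^ 2 < 1 := by
    have h0 : ‖z‖ ^ 2 < 1 := by nlinarith [norm_nonneg z]
    rw [Complex.sq_norm, Complex.normSq_apply] at h0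
    simpa [pow_two] using h0
  rw [Complex.div_re, ← add_div]
  apply div_pos _ h1
  simp only [Complex.sub_re, Complex.sub_im, Complex.add_re, Complex.add_im]
  nlinarith [hη2, hz2]

lemma absS {η u : ℂ} (hη : ‖η‖ = 1) (hu : 0 < u.re) :
    ‖η * (u - 1) / (u + 1)‖ < 1 := by
  have hu1 : u + 1 ≠ 0 := by
    intro h
    have h2 : (u + 1).re = 0 := by rw [h]; simp
    simp only [Complex.add_re, Complex.one_re] at h2
    linarith
  rw [norm_div, norm_mul, hη, one_mul, div_lt_one (norm_pos_iff.2 hu1)]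
  have h2 : ‖u - 1‖ ^ 2 < ‖u + 1‖ ^ 2 := by
    rw [Complex.sq_norm, Complex.sq_norm, Complex.normSq_apply, Complex.normSq_apply]
    simp only [Complex.sub_re, Complex.sub_im, Complex.add_re, Complex.add_im,
      Complex.one_re, Complex.one_im]
    nlinarith [hu]
  exact lt_of_pow_lt_pow_left₀ 2 (norm_nonneg _) h2

lemma rho_SS {η : ℂ} (hη : ‖η‖ = 1) (a : ℂ) {u : ℂ} (hu : 0 < u.re) :
    rho η a (η * (u - 1) / (u + 1)) = η * (u + a - 1) / (u + a + 1) := by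
  have hη0 : η ≠ 0 := by
    intro h; rw [h] at hη; simp at hη
  have hu1 : u + 1 ≠ 0 := by
    intro h
    have h2 : (u + 1).re = 0 := by rw [h]; simp
    simp only [Complex.add_re, Complex.one_re] at h2
    linarith
  have habs : ‖η * (u - 1) / (u + 1)‖ < 1 := absS hη hu
  have hsub : η - η * (u - 1) / (u + 1) ≠ 0 := by
    refine sub_ne_zero.2 fun h => ?_
    rw [← h, hη] at habs
    exact lt_irrefl 1 habs
  rw [rho_eq hsub, TS hη0 hu1]

lemma derivLFT (α β γ δ ζ : ℂ) (h : γ * ζ + δ ≠ 0) :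
    deriv (fun z => (α * z + β) / (γ * z + δ)) ζ = (α * δ - β * γ) / ((γ * ζ + δ) ^ 2) := by
  have h1 : HasDerivAt (fun z : ℂ => α * z + β) α ζ := by
    simpa using ((hasDerivAt_id ζ).const_mul α).add_const β
  have h2 : HasDerivAt (fun z : ℂ => γ * z + δ) γ ζ := by
    simpa using ((hasDerivAt_id ζ).const_mul γ).add_const δ
  rw [show (fun z => (α * z + β) / (γ * z + δ)) = (fun z => α * z + β) / (fun z => γ * z + δ) from rfl, (h1.div h2 h).deriv]
  congr 1
  ring

theorem stmt_5 (A B C D A' B' C' D' : ℂ)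
    (hdet : A * D - B * C ≠ 0) (hdet' : A' * D' - B' * C' ≠ 0)
    (φ ψ : ℂ → ℂ)
    (hφ : ∀ z, φ z = (A * z + B) / (C * z + D))
    (hψ : ∀ z, ψ z = (A' * z + B') / (C' * z + D'))
    (hden : ∀ z : ℂ, ‖z‖ ≤ 1 → C * z + D ≠ 0)
    (hden' : ∀ z : ℂ, ‖z‖ ≤ 1 → C' * z + D' ≠ 0)
    (hmaps : ∀ z : ℂ, ‖z‖ < 1 → ‖φ z‖ < 1)
    (hnotonto : φ '' Metric.ball 0 1 ≠ Metric.ball 0 1)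
    (ζ η : ℂ) (hζ : ‖ζ‖ = 1) (hη : ‖η‖ = 1) (hne : ζ ≠ η)
    (hφζ : φ ζ = η)
    (b : ℝ) (hb : 0 < b)
    (hbim : (fun z => rho η (b : ℂ) z) '' Metric.ball 0 1 = φ '' Metric.ball 0 1) :
    ((∀ z : ℂ, ‖z‖ < 1 → ‖ψ z‖ < 1) ∧
        ψ '' Metric.ball 0 1 ≠ Metric.ball 0 1 ∧ ψ ζ = η ∧ deriv ψ ζ = deriv φ ζ) ↔
      ∃ a : ℂ, -b < a.re ∧ ∀ z ∈ Metric.ball (0 : ℂ) 1, ψ z = rho η a (φ z) := by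
  have hball : ∀ w : ℂ, w ∈ Metric.ball (0:ℂ) 1 ↔ ‖w‖ < 1 := fun w => by
    rw [Metric.mem_ball, dist_zero_right]
  have hη0 : η ≠ 0 := fun h => by rw [h] at hη; simp at hη
  have habsne : ∀ w : ℂ, ‖w‖ < 1 → η - w ≠ 0 := fun w hw =>
    sub_ne_zero.2 fun hh => absurd hη (by rw [hh]; exact ne_of_lt hw)
  have hζle : ‖ζ‖ ≤ 1 := le_of_eq hζ
  have hCD : C * ζ + D ≠ 0 := hden ζ hζle
  have hC'D' : C' * ζ + D' ≠ 0 := hden' ζ hζle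
  have hrel : A * ζ + B = η * (C * ζ + D) := by
    have h := (hφ ζ).symm.trans hφζ
    rwa [div_eq_iff hCD] at h
  have hφS : ∀ z : ℂ, ‖z‖ < 1 →
      ∃ u : ℂ, b < u.re ∧ φ z = η * (u - 1) / (u + 1) := by
    intro z hz
    have hmem : φ z ∈ φ '' Metric.ball 0 1 := Set.mem_image_of_mem φ ((hball z).2 hz)
    rw [← hbim] at hmem
    obtain ⟨z₁, hz₁, hz₁eq⟩ := hmem
    have hz₁eq' : rho η (b:ℂ) z₁ = φ z := hz₁eq
    have hz₁abs : ‖z₁‖ < 1 := (hball z₁).1 hz₁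
    have hz₁η : η - z₁ ≠ 0 := habsne z₁ hz₁abs
    have hre : 0 < ((η + z₁) / (η - z₁)).re := reT hη hz₁abs
    refine ⟨(η + z₁) / (η - z₁) + (b:ℂ), ?_, ?_⟩
    · simp only [Complex.add_re, Complex.ofReal_re]; linarith
    · rw [← hz₁eq']
      exact rho_eq hz₁η
  constructor
  · rintro ⟨hm', hno', hψζ, hd⟩
    have hrel' : A' * ζ + B' = η * (C' * ζ + D') := by
      have h := (hψ ζ).symm.trans hψζ
      rwa [div_eq_iff hC'D'] at h
    have he : η * C - A ≠ 0 := by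
      intro h
      exact hdet (by linear_combination (-(C * ζ + D)) * h + (-C) * hrel)
    have he' : η * C' - A' ≠ 0 := by
      intro h
      exact hdet' (by linear_combination (-(C' * ζ + D')) * h + (-C') * hrel')
    have hdd : (A' * D' - B' * C') * (C * ζ + D) ^ 2
        = (A * D - B * C) * (C' * ζ + D') ^ 2 := by
      have h1 : deriv ψ ζ = (A' * D' - B' * C') / ((C' * ζ + D') ^ 2) := by
        rw [show ψ = (fun z => (A' * z + B') / (C' * z + D')) from funext hψ]
        exact derivLFT A' B' C' D' ζ hC'D'
      have h2 : deriv φ ζ = (A * D - B * C) / ((C * ζ + D) ^ 2) := by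
        rw [show φ = (fun z => (A * z + B) / (C * z + D)) from funext hφ]
        exact derivLFT A B C D ζ hCD
      have h3 := hd
      rw [h1, h2, div_eq_div_iff (pow_ne_zero 2 hC'D') (pow_ne_zero 2 hCD)] at h3
      exact h3
    have hdet'e : A' * D' - B' * C' = -((η * C' - A') * (C' * ζ + D')) := by
      linear_combination (-C') * hrel'
    have hdete : A * D - B * C = -((η * C - A) * (C * ζ + D)) := by
      linear_combination (-C) * hrel
    have hr : (η * C' - A') * (C * ζ + D) = (η * C - A) * (C' * ζ + D') := by
      have h3 : ((η * C' - A') * (C * ζ + D)) * ((C * ζ + D) * (C' * ζ + D')) =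
          ((η * C - A) * (C' * ζ + D')) * ((C * ζ + D) * (C' * ζ + D')) := by
        linear_combination (-1 : ℂ) * hdd + (C * ζ + D) ^ 2 * hdet'e
          - (C' * ζ + D') ^ 2 * hdete
      exact mul_right_cancel₀ (mul_ne_zero hCD hC'D') h3
    have hTT : ∀ z : ℂ, ‖z‖ < 1 →
        (η + ψ z) / (η - ψ z) = (η + φ z) / (η - φ z) +
          ((A' + η * C') / (η * C' - A') - (A + η * C) / (η * C - A)) := by
      intro z hz
      have hDz : C * z + D ≠ 0 := hden z hz.le
      have hDz' : C' * z + D' ≠ 0 := hden' z hz.le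
      have hzζ : z - ζ ≠ 0 := sub_ne_zero.2 (by rintro rfl; exact absurd hζ (ne_of_lt hz))
      have h1' : η - ψ z = ((η * C' - A') * (z - ζ)) / (C' * z + D') := by
        rw [hψ z, eq_div_iff hDz', sub_mul, div_mul_cancel₀ _ hDz']
        linear_combination (-1 : ℂ) * hrel'
      have h2' : η + ψ z = ((A' + η * C') * z + (B' + η * D')) / (C' * z + D') := by
        rw [hψ z, eq_div_iff hDz', add_mul, div_mul_cancel₀ _ hDz']
        ring
      have h1 : η - φ z = ((η * C - A) * (z - ζ)) / (C * z + D) := by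
        rw [hφ z, eq_div_iff hDz, sub_mul, div_mul_cancel₀ _ hDz]
        linear_combination (-1 : ℂ) * hrel
      have h2 : η + φ z = ((A + η * C) * z + (B + η * D)) / (C * z + D) := by
        rw [hφ z, eq_div_iff hDz, add_mul, div_mul_cancel₀ _ hDz]
        ring
      rw [h1', h2', h1, h2, div_div_cancel'' _ _ _ hDz', div_div_cancel'' _ _ _ hDz]
      have hsum : ((A + η * C) * z + (B + η * D)) / ((η * C - A) * (z - ζ)) +
          ((A' + η * C') / (η * C' - A') - (A + η * C) / (η * C - A)) =
          (((A + η * C) * z + (B + η * D)) * (η * C' - A') +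
            ((A' + η * C') * (η * C - A) - (A + η * C) * (η * C' - A')) * (z - ζ)) /
            ((η * C - A) * ((η * C' - A') * (z - ζ))) := by
        field_simp
      rw [hsum, div_eq_div_iff (mul_ne_zero he' hzζ)
        (mul_ne_zero he (mul_ne_zero he' hzζ))]
      linear_combination (-2*η*(η * C' - A')*(z - ζ)) * hr +
        ((η * C - A)*(η * C' - A')*(z - ζ)) * hrel' +
        (-((η * C' - A')*(η * C' - A'))*(z - ζ)) * hrel
    obtain ⟨aa, haa⟩ : ∃ aa : ℂ,
        aa = (A' + η * C') / (η * C' - A') - (A + η * C) / (η * C - A) := ⟨_, rfl⟩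
    rw [← haa] at hTT
    have hge : -b ≤ aa.re := by
      refine le_of_forall_pos_lt_add fun ε hε => ?_
      have hεre : 0 < ((ε : ℂ)).re := by simpa using hε
      have hSt : ‖η * ((ε:ℂ) - 1) / ((ε:ℂ) + 1)‖ < 1 := absS hη hεre
      have himg : rho η (b:ℂ) (η * ((ε:ℂ) - 1) / ((ε:ℂ) + 1)) ∈
          (fun z => rho η (b:ℂ) z) '' Metric.ball 0 1 :=
        Set.mem_image_of_mem _ ((hball _).2 hSt)
      rw [hbim] at himg
      obtain ⟨z', hz'b, hz'eq⟩ := himg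
      have hz'abs : ‖z'‖ < 1 := (hball z').1 hz'b
      have hSS := rho_SS hη (b:ℂ) hεre
      rw [hSS] at hz'eq
      have hub1 : ((ε:ℂ) + (b:ℂ)) + 1 ≠ 0 := by
        intro hh
        have h2 := congrArg Complex.re hh
        simp only [Complex.add_re, Complex.ofReal_re, Complex.one_re, Complex.zero_re] at h2
        linarith
      have hTφ : (η + φ z') / (η - φ z') = (ε:ℂ) + (b:ℂ) := by
        rw [hz'eq]; exact TS hη0 hub1
      have hTψre : 0 < ((η + ψ z') / (η - ψ z')).re := reT hη (hm' z' hz'abs)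
      rw [hTT z' hz'abs, hTφ] at hTψre
      simp only [Complex.add_re, Complex.ofReal_re] at hTψre
      linarith
    refine ⟨aa, ?_, ?_⟩
    · rcases hge.lt_or_eq with h | h
      · exact h
      · exfalso
        apply hno'
        apply Set.Subset.antisymm
        · rintro w ⟨z, hzb, rfl⟩
          exact (hball _).2 (hm' z ((hball z).1 hzb))
        · intro w hwb
          have hwabs : ‖w‖ < 1 := (hball w).1 hwb
          have hwη : η - w ≠ 0 := habsne w hwabs
          have hure : 0 < ((η + w) / (η - w)).re := reT hη hwabs
          have hv : 0 < ((η + w) / (η - w) - aa - (b:ℂ)).re := by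
            simp only [Complex.sub_re, Complex.ofReal_re]
            rw [← h]
            linarith
          have hS2 := absS hη hv
          have himg : rho η (b:ℂ)
              (η * (((η + w) / (η - w) - aa - (b:ℂ)) - 1) /
                (((η + w) / (η - w) - aa - (b:ℂ)) + 1)) ∈
              (fun z => rho η (b:ℂ) z) '' Metric.ball 0 1 :=
            Set.mem_image_of_mem _ ((hball _).2 hS2)
          rw [hbim] at himg
          obtain ⟨z', hz'b, hz'eq⟩ := himg
          have hSS := rho_SS hη (b:ℂ) hv
          rw [hSS] at hz'eq
          rw [show (η + w) / (η - w) - aa - (b:ℂ) + (b:ℂ) = (η + w) / (η - w) - aa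
            by ring] at hz'eq
          have hu1 : ((η + w) / (η - w) - aa) + 1 ≠ 0 := by
            intro hh
            have h2 := congrArg Complex.re hh
            simp only [Complex.add_re, Complex.sub_re, Complex.one_re, Complex.zero_re] at h2
            rw [← h] at h2
            linarith
          have hTφ : (η + φ z') / (η - φ z') = (η + w) / (η - w) - aa := by
            rw [hz'eq]; exact TS hη0 hu1
          have hz'abs : ‖z'‖ < 1 := (hball z').1 hz'b
          have hT := hTT z' hz'abs
          rw [hTφ, show (η + w) / (η - w) - aa + aa = (η + w) / (η - w) by ring] at hT
          have hψab : ‖ψ z'‖ < 1 := hm' z' hz'abs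
          have hψη : η - ψ z' ≠ 0 := habsne _ hψab
          have s1 := STl hη0 hψη
          rw [hT] at s1
          exact ⟨z', hz'b, s1.symm.trans (STl hη0 hwη)⟩
    · intro z hzb
      have hz : ‖z‖ < 1 := (hball z).1 hzb
      have hφη : η - φ z ≠ 0 := habsne _ (hmaps z hz)
      have hψη : η - ψ z ≠ 0 := habsne _ (hm' z hz)
      rw [rho_eq hφη, ← hTT z hz]
      exact (STl hη0 hψη).symm
  · rintro ⟨a, ha, heq⟩
    have hba : 0 < b + a.re := by linarith
    have hkey : ∀ z : ℂ, ‖z‖ < 1 → ∃ u : ℂ, b < u.re ∧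
        φ z = η * (u - 1) / (u + 1) ∧ ψ z = η * (u + a - 1) / (u + a + 1) := by
      intro z hz
      obtain ⟨u, hu, hφu⟩ := hφS z hz
      have hupos : 0 < u.re := lt_trans hb hu
      refine ⟨u, hu, hφu, ?_⟩
      rw [heq z ((hball z).2 hz), hφu, rho_SS hη a hupos]
    have hm' : ∀ z : ℂ, ‖z‖ < 1 → ‖ψ z‖ < 1 := by
      intro z hz
      obtain ⟨u, hu, _, hψu⟩ := hkey z hz
      rw [hψu]
      exact absS hη (by simp only [Complex.add_re]; linarith)
    have hcross : ∀ z : ℂ, ‖z‖ < 1 →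
        (A' * z + B') * ((2 + a) * η * (C * z + D) - a * (A * z + B)) =
          (η * ((2 - a) * (A * z + B) + a * η * (C * z + D))) * (C' * z + D') := by
      intro z hz
      obtain ⟨u, hu, hφu, hψu⟩ := hkey z hz
      have hDz : C * z + D ≠ 0 := hden z hz.le
      have hDz' : C' * z + D' ≠ 0 := hden' z hz.le
      have hu1 : u + 1 ≠ 0 := by
        intro hh
        have h2 := congrArg Complex.re hh
        simp only [Complex.add_re, Complex.one_re, Complex.zero_re] at h2
        linarith
      have hua1 : u + a + 1 ≠ 0 := by
        intro hh
        have h2 := congrArg Complex.re hh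
        simp only [Complex.add_re, Complex.one_re, Complex.zero_re] at h2
        linarith
      have hφeq : (A * z + B) * (u + 1) = η * (u - 1) * (C * z + D) := by
        have h := (hφ z).symm.trans hφu
        rwa [div_eq_div_iff hDz hu1] at h
      have hψeq : (A' * z + B') * (u + a + 1) = η * (u + a - 1) * (C' * z + D') := by
        have h := (hψ z).symm.trans hψu
        rwa [div_eq_div_iff hDz' hua1] at h
      linear_combination (η * (C * z + D) - (A * z + B)) * hψeq
        + ((A' * z + B') - η * (C' * z + D')) * hφeq
    have habshalf : ‖(1:ℂ)/2‖ < 1 := by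
      rw [show ((1:ℂ)/2) = ((1/2 : ℝ) : ℂ) by norm_num, Complex.norm_real, Real.norm_eq_abs,
        abs_of_pos (by norm_num : (0:ℝ) < 1/2)]
      norm_num
    have habsnhalf : ‖-((1:ℂ)/2)‖ < 1 := by
      rw [show (-((1:ℂ)/2)) = ((-(1/2) : ℝ) : ℂ) by norm_num, Complex.norm_real, Real.norm_eq_abs,
        abs_neg, abs_of_pos (by norm_num : (0:ℝ) < 1/2)]
      norm_num
    have hcr0 := hcross 0 (by simp)
    have hcrp := hcross (1/2) habshalf
    have hcrm := hcross (-(1/2)) habsnhalf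
    have hcrζ : (A' * ζ + B') * ((2 + a) * η * (C * ζ + D) - a * (A * ζ + B)) =
        (η * ((2 - a) * (A * ζ + B) + a * η * (C * ζ + D))) * (C' * ζ + D') := by
      linear_combination (2*ζ^2 + ζ) * hcrp + (2*ζ^2 - ζ) * hcrm + (1 - 4*ζ^2) * hcr0
    have hrel' : A' * ζ + B' = η * (C' * ζ + D') := by
      have h2 : (A' * ζ + B') * (2 * η * (C * ζ + D)) =
          (η * (C' * ζ + D')) * (2 * η * (C * ζ + D)) := by
        linear_combination hcrζ + (a * (A' * ζ + B') + (2 - a) * η * (C' * ζ + D')) * hrel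
      exact mul_right_cancel₀ (mul_ne_zero (mul_ne_zero two_ne_zero hη0) hCD) h2
    refine ⟨hm', ?_, ?_, ?_⟩
    · intro hcon
      have hc : 0 < ((b + a.re)/2 : ℝ) := by linarith
      have hcre : 0 < (((((b + a.re)/2 : ℝ)) : ℂ)).re := by simpa using hc
      have hw₀ : ‖η * (((((b + a.re)/2 : ℝ)) : ℂ) - 1) /
          (((((b + a.re)/2 : ℝ)) : ℂ) + 1)‖ < 1 := absS hη hcre
      have hmem : η * (((((b + a.re)/2 : ℝ)) : ℂ) - 1) / (((((b + a.re)/2 : ℝ)) : ℂ) + 1) ∈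
          ψ '' Metric.ball 0 1 := by
        rw [hcon]; exact (hball _).2 hw₀
      obtain ⟨z, hzb, hzeq⟩ := hmem
      obtain ⟨u, hu, _, hψu⟩ := hkey z ((hball z).1 hzb)
      have hua1 : (u + a) + 1 ≠ 0 := by
        intro hh
        have h2 := congrArg Complex.re hh
        simp only [Complex.add_re, Complex.one_re, Complex.zero_re] at h2
        linarith
      have hc1 : ((((b + a.re)/2 : ℝ)) : ℂ) + 1 ≠ 0 := by
        intro hh
        have h2 := congrArg Complex.re hh
        simp only [Complex.add_re, Complex.ofReal_re, Complex.one_re, Complex.zero_re] at h2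
        linarith
      have heqS : η * (u + a - 1) / (u + a + 1) =
          η * (((((b + a.re)/2 : ℝ)) : ℂ) - 1) / (((((b + a.re)/2 : ℝ)) : ℂ) + 1) :=
        hψu.symm.trans hzeq
      have huc : u + a = ((((b + a.re)/2 : ℝ)) : ℂ) := by
        have t1 := TS (u := u + a) hη0 hua1
        have t2 := TS (u := ((((b + a.re)/2 : ℝ)) : ℂ)) hη0 hc1
        rw [← t1, ← t2, heqS]
      have h2 := congrArg Complex.re huc
      simp only [Complex.add_re, Complex.ofReal_re] at h2
      linarith
    · rw [hψ ζ, hrel']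
      exact mul_div_cancel_right₀ η hC'D'
    · have h2c : A' * ((2+a)*η*C - a*A) = (η*((2-a)*A + a*η*C)) * C' := by
        linear_combination (2:ℂ) * hcrp + (2:ℂ) * hcrm - (4:ℂ) * hcr0
      have h1c : A' * ((2+a)*η*D - a*B) + B' * ((2+a)*η*C - a*A) = (η*((2-a)*A + a*η*C)) * D' + (η*((2-a)*B + a*η*D)) * C' := by
        linear_combination hcrp - hcrm
      have h0c : B' * ((2+a)*η*D - a*B) = (η*((2-a)*B + a*η*D)) * D' := by
        linear_combination hcr0
      have hp2 : (((2+a)*η*D - a*B)*A' - (η*((2-a)*B + a*η*D))*C') * (((2+a)*η*D - a*B)*A' - (η*((2-a)*B + a*η*D))*C') = ((η*((2-a)*A + a*η*C))*((2+a)*η*D - a*B) - (η*((2-a)*B + a*η*D))*((2+a)*η*C - a*A)) * (A' * D' - B' * C') := by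
        linear_combination (((2+a)*η*D - a*B)*A' - (η*((2-a)*B + a*η*D))*C') * h1c - (A'*((2+a)*η*C - a*A) - (η*((2-a)*A + a*η*C))*C') * h0c
      have hCp : ((η*((2-a)*A + a*η*C))*((2+a)*η*D - a*B) - (η*((2-a)*B + a*η*D))*((2+a)*η*C - a*A)) * C' = (((2+a)*η*D - a*B)*A' - (η*((2-a)*B + a*η*D))*C') * ((2+a)*η*C - a*A) := by
        linear_combination (-((2+a)*η*D - a*B)) * h2c
      have hDp : ((η*((2-a)*A + a*η*C))*((2+a)*η*D - a*B) - (η*((2-a)*B + a*η*D))*((2+a)*η*C - a*A)) * D' = (((2+a)*η*D - a*B)*A' - (η*((2-a)*B + a*η*D))*C') * ((2+a)*η*D - a*B) := by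
        linear_combination ((2+a)*η*C - a*A) * h0c - ((2+a)*η*D - a*B) * h1c
      have hprop : ((η*((2-a)*A + a*η*C))*((2+a)*η*D - a*B) - (η*((2-a)*B + a*η*D))*((2+a)*η*C - a*A)) * (C' * ζ + D') = (((2+a)*η*D - a*B)*A' - (η*((2-a)*B + a*η*D))*C') * (((2+a)*η*C - a*A) * ζ + ((2+a)*η*D - a*B)) := by
        linear_combination ζ * hCp + hDp
      have hCd2 : ((2+a)*η*C - a*A) * ζ + ((2+a)*η*D - a*B) = 2 * η * (C * ζ + D) := by
        linear_combination (-a) * hrel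
      have e1 : ((η*((2-a)*A + a*η*C))*((2+a)*η*D - a*B) - (η*((2-a)*B + a*η*D))*((2+a)*η*C - a*A)) * (C' * ζ + D') = (((2+a)*η*D - a*B)*A' - (η*((2-a)*B + a*η*D))*C') * (2 * η * (C * ζ + D)) := by
        rw [← hCd2]; exact hprop
      have e2 : (((η*((2-a)*A + a*η*C))*((2+a)*η*D - a*B) - (η*((2-a)*B + a*η*D))*((2+a)*η*C - a*A)) * (C' * ζ + D')) ^ 2 = ((((2+a)*η*D - a*B)*A' - (η*((2-a)*B + a*η*D))*C') * (2 * η * (C * ζ + D))) ^ 2 := by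
        rw [e1]
      have det2ne : ((η*((2-a)*A + a*η*C))*((2+a)*η*D - a*B) - (η*((2-a)*B + a*η*D))*((2+a)*η*C - a*A)) ≠ 0 := by
        intro hh
        apply hdet
        have h4 : (4:ℂ) * η^2 * (A * D - B * C) = 0 := by linear_combination hh
        have h5 : (4:ℂ) * η^2 ≠ 0 := by
          apply mul_ne_zero
          · norm_num
          · exact pow_ne_zero 2 hη0
        exact (mul_eq_zero.1 h4).resolve_left h5
      have key : (((η*((2-a)*A + a*η*C))*((2+a)*η*D - a*B) - (η*((2-a)*B + a*η*D))*((2+a)*η*C - a*A)) * ((η*((2-a)*A + a*η*C))*((2+a)*η*D - a*B) - (η*((2-a)*B + a*η*D))*((2+a)*η*C - a*A))) * ((A' * D' - B' * C') * (C * ζ + D) ^ 2) =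
          (((η*((2-a)*A + a*η*C))*((2+a)*η*D - a*B) - (η*((2-a)*B + a*η*D))*((2+a)*η*C - a*A)) * ((η*((2-a)*A + a*η*C))*((2+a)*η*D - a*B) - (η*((2-a)*B + a*η*D))*((2+a)*η*C - a*A))) * ((A * D - B * C) * (C' * ζ + D') ^ 2) := by
        linear_combination (-((C * ζ + D) ^ 2) * ((η*((2-a)*A + a*η*C))*((2+a)*η*D - a*B) - (η*((2-a)*B + a*η*D))*((2+a)*η*C - a*A))) * hp2 + (-(A * D - B * C)) * e2
      have final := mul_left_cancel₀ (mul_ne_zero det2ne det2ne) key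
      rw [show ψ = (fun z => (A' * z + B') / (C' * z + D')) from funext hψ,
        show φ = (fun z => (A * z + B) / (C * z + D)) from funext hφ,
        derivLFT A' B' C' D' ζ hC'D', derivLFT A B C D ζ hCD,
        div_eq_div_iff (pow_ne_zero 2 hC'D') (pow_ne_zero 2 hCD)]
      exact final
end

section
/- Let γ ∈ ℂ with |γ| = 1 and let a ∈ ℂ with Re a ≥ 0. Then the denominator (2+a)γ − a·z of ρ_{γ,a} does not vanish for any z ∈ 𝔻, and the image ρ_{γ,a}(𝔻) equals the open disk {w ∈ ℂ : |w − (1−r)γ| < r}, where r = 1/(1 + Re a). In particular ρ_{γ,a} maps 𝔻 into 𝔻, and ρ_{γ,a}(𝔻) = 𝔻 if and only if Re a = 0. -/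
open Complex

set_option maxHeartbeats 1000000 in
lemma rho_inv_aux (γ a w : ℂ) (hD2 : (2-a)*γ + a*w ≠ 0)
    (hD : (2+a)*γ - a*(γ*((2+a)*w - a*γ)/((2-a)*γ+a*w)) ≠ 0) :
    rho γ a (γ*((2+a)*w - a*γ)/((2-a)*γ+a*w)) = w := by
  rw [rho, div_eq_iff hD]
  generalize hDD : (2-a)*γ + a*w = D at hD2 ⊢
  field_simp
  subst hDD
  ring

set_option maxHeartbeats 1000000

theorem stmt_7 (γ a : ℂ) (hγ : ‖γ‖ = 1) (ha : 0 ≤ a.re) :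
    (∀ z ∈ Metric.ball (0 : ℂ) 1, (2 + a) * γ - a * z ≠ 0) ∧
    (fun z => rho γ a z) '' Metric.ball 0 1 =
      Metric.ball (((1 - (1 + a.re)⁻¹ : ℝ) : ℂ) * γ) ((1 + a.re)⁻¹) ∧
    (∀ z ∈ Metric.ball (0 : ℂ) 1, rho γ a z ∈ Metric.ball (0 : ℂ) 1) ∧
    ((fun z => rho γ a z) '' Metric.ball 0 1 = Metric.ball (0 : ℂ) 1 ↔ a.re = 0) := by
  have h1 : (0:ℝ) < 1 + a.re := by linarith
  have h1c : ((1 + a.re : ℝ) : ℂ) ≠ 0 := by exact_mod_cast h1.ne'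
  have h1c' : (1 : ℂ) + (a.re : ℂ) ≠ 0 := by
    intro h
    have : ((1 + a.re : ℝ) : ℂ) = 0 := by push_cast; linear_combination h
    exact h1c this
  have hγ2 : normSq γ = 1 := by rw [← Complex.sq_norm, hγ]; norm_num
  have hg : γ.re*γ.re + γ.im*γ.im = 1 := hγ2
  set r : ℝ := (1 + a.re)⁻¹ with hr
  set c : ℂ := ((1 - r : ℝ) : ℂ) * γ with hc
  have hrpos : 0 < r := inv_pos.mpr h1
  have hr1 : r ≤ 1 := by rw [hr]; exact inv_le_one_of_one_le₀ (by linarith)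
  have hinv : (1 + a.re) * r = 1 := mul_inv_cancel₀ h1.ne'
  have hca : (starRingEnd ℂ) a = 2*(a.re:ℂ) - a := by
    have h := Complex.add_conj a
    push_cast at h
    linear_combination h
  -- denominator nonvanishing
  have hden : ∀ z ∈ Metric.ball (0 : ℂ) 1, (2 + a) * γ - a * z ≠ 0 := by
    intro z hz
    rw [Metric.mem_ball, dist_zero_right] at hz
    intro h
    have h2 : (2+a)*γ = a*z := by linear_combination h
    have h3 := congrArg (‖·‖) h2
    simp only [norm_mul, hγ, mul_one] at h3
    have hz' : ‖z‖ < 1 := hz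
    have h4 : ‖2+a‖ * ‖2+a‖ = ‖a‖ * ‖z‖ * (‖a‖ * ‖z‖) := by rw [h3]
    have h5 : ‖2+a‖ ^ 2 = normSq (2+a) := (Complex.sq_norm _)
    have h6 : ‖a‖ ^ 2 = normSq a := (Complex.sq_norm _)
    have hb := norm_nonneg a
    have hb2 := norm_nonneg z
    have hsq : normSq (2+a) = a.re*a.re + a.im*a.im + 4 + 4*a.re := by
      simp only [normSq_apply, add_re, add_im, re_ofNat, im_ofNat]; ring
    have hsq2 : normSq a = a.re*a.re + a.im*a.im := rfl
    have h7 : ‖a‖ * ‖z‖ * (‖a‖ * ‖z‖) ≤ ‖a‖ * ‖a‖ := by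
      have hz2 : ‖z‖ * ‖z‖ ≤ 1 := by nlinarith
      nlinarith [mul_nonneg (mul_nonneg hb hb) (sub_nonneg.mpr hz2)]
    have h5' : ‖2+a‖ * ‖2+a‖ = normSq (2+a) := by rw [← h5]; ring
    have h6' : ‖a‖ * ‖a‖ = normSq a := by rw [← h6]; ring
    linarith
  -- key identity for forward direction
  have key : ∀ z : ℂ, (2 + a) * γ - a * z ≠ 0 →
      normSq ((2+a)*γ - a*z) * (1 - (1+a.re)^2 * normSq (rho γ a z - c)) = (4+4*a.re)*(1 - normSq z) := by
    intro z hD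
    have hM : ((1 + a.re : ℝ):ℂ) * ((rho γ a z - c) * ((2+a)*γ - a*z)) =
        γ*((2+(starRingEnd ℂ) a)*z - (starRingEnd ℂ) a*γ) := by
      rw [rho, hca, hc, hr]
      push_cast
      rw [div_sub' hD, div_mul_cancel₀ _ hD]
      field_simp [h1c']
      ring
    have h2 := congrArg normSq hM
    simp only [map_mul, normSq_ofReal, hγ2, one_mul] at h2
    have hII : normSq ((2+a)*γ - a*z) - normSq ((2+(starRingEnd ℂ) a)*z - (starRingEnd ℂ) a*γ)
        = (4+4*a.re)*(1 - normSq z) := by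
      simp only [normSq_apply, mul_re, mul_im, sub_re, sub_im, add_re, add_im,
        conj_re, conj_im, re_ofNat, im_ofNat]
      ring_nf
      linear_combination (4 + 4*a.re) * hg
    nlinarith [h2, hII]
  -- image equality
  have h_img : (fun z => rho γ a z) '' Metric.ball 0 1 = Metric.ball c r := by
    ext w
    simp only [Set.mem_image]
    constructor
    · rintro ⟨z, hz, rfl⟩
      have hz1 : ‖z‖ < 1 := by rwa [Metric.mem_ball, dist_zero_right] at hz
      have hnz : normSq z < 1 := by
        rw [← Complex.sq_norm]; nlinarith [norm_nonneg z]
      have hD := hden z hz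
      have hk := key z hD
      have hDpos : 0 < normSq ((2+a)*γ - a*z) := normSq_pos.mpr hD
      have h5 : (1+a.re)^2 * normSq (rho γ a z - c) < 1 := by nlinarith
      have h6 : normSq (rho γ a z - c) < r^2 := by
        nlinarith [normSq_nonneg (rho γ a z - c), sq_nonneg r, hinv]
      rw [Metric.mem_ball, Complex.dist_eq]
      have := Complex.sq_norm (rho γ a z - c)
      refine lt_of_pow_lt_pow_left₀ 2 hrpos.le ?_
      rw [this]; exact h6
    · intro hw
      rw [Metric.mem_ball, Complex.dist_eq] at hw
      have hT : normSq (((1+a.re:ℝ):ℂ)*w - ((a.re:ℝ):ℂ)*γ) < 1 := by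
        have heq : ((1+a.re:ℝ):ℂ) * (w - c) = ((1+a.re:ℝ):ℂ)*w - ((a.re:ℝ):ℂ)*γ := by
          rw [hc, hr]; push_cast; field_simp [h1c']; ring
        rw [← heq, map_mul, normSq_ofReal]
        have h2 : normSq (w - c) < r^2 := by
          rw [← Complex.sq_norm]
          have := norm_nonneg (w - c)
          nlinarith
        have h3 : (1+a.re)*(1+a.re)*(r^2) = 1 := by
          linear_combination ((1+a.re)*r + 1) * hinv
        nlinarith [mul_lt_mul_of_pos_left h2 (mul_pos h1 h1)]
      have hIII : (1+a.re) * (normSq ((2-a)*γ + a*w) - normSq ((2+a)*w - a*γ))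
          = 4*(1 - normSq (((1+a.re:ℝ):ℂ)*w - ((a.re:ℝ):ℂ)*γ)) := by
        simp only [normSq_apply, mul_re, mul_im, sub_re, sub_im, add_re, add_im,
          conj_re, conj_im, re_ofNat, im_ofNat, ofReal_re, ofReal_im]
        ring_nf
        linear_combination 4 * hg
      have hgt : normSq ((2+a)*w - a*γ) < normSq ((2-a)*γ + a*w) := by nlinarith
      have hD2 : (2-a)*γ + a*w ≠ 0 := by
        intro h
        rw [h] at hgt
        simp only [normSq_zero] at hgt
        nlinarith [normSq_nonneg ((2+a)*w - a*γ)]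
      set z0 : ℂ := γ*((2+a)*w - a*γ) / ((2-a)*γ + a*w) with hz0def
      have hz0 : normSq z0 < 1 := by
        rw [hz0def, normSq_div, map_mul, hγ2, one_mul, div_lt_one (normSq_pos.mpr hD2)]
        exact hgt
      have hz0b : z0 ∈ Metric.ball (0:ℂ) 1 := by
        rw [Metric.mem_ball, dist_zero_right]
        refine lt_of_pow_lt_pow_left₀ 2 zero_le_one ?_
        rw [Complex.sq_norm, one_pow]; exact hz0
      refine ⟨z0, hz0b, ?_⟩
      have hDz0 := hden z0 hz0b
      rw [hz0def] at hDz0 ⊢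
      exact rho_inv_aux γ a w hD2 hDz0
  refine ⟨hden, h_img, ?_, ?_⟩
  · intro z hz
    have hm : rho γ a z ∈ Metric.ball c r := by
      rw [← h_img]; exact ⟨z, hz, rfl⟩
    rw [Metric.mem_ball] at hm ⊢
    have h2 : dist (rho γ a z) (0:ℂ) ≤ dist (rho γ a z) c + dist c 0 := dist_triangle _ _ _
    have h3 : dist c (0:ℂ) = 1 - r := by
      rw [dist_zero_right, hc, norm_mul, Complex.norm_real, Real.norm_eq_abs, hγ, mul_one,
        _root_.abs_of_nonneg (by linarith)]
    linarith
  · constructor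
    · intro h
      by_contra hne
      have hgt0 : 0 < a.re := lt_of_le_of_ne ha (Ne.symm hne)
      have hr1' : r < 1 := by rw [hr]; exact inv_lt_one_of_one_lt₀ (by linarith)
      set t : ℝ := max 0 (2*r - 1) with ht
      have ht0 : 0 ≤ t := le_max_left _ _
      have ht1 : t < 1 := by
        apply max_lt <;> linarith
      have htr : 2*r - 1 ≤ t := le_max_right _ _
      have hmem : (-(t:ℝ):ℂ)*γ ∈ Metric.ball (0:ℂ) 1 := by
        rw [Metric.mem_ball, dist_zero_right, norm_mul, hγ, mul_one]
        rw [show (-(t:ℝ):ℂ) = ((-t : ℝ) : ℂ) by push_cast; ring, Complex.norm_real, Real.norm_eq_abs,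
          abs_of_nonpos (by linarith)]
        linarith
      have hmem' : (-(t:ℝ):ℂ)*γ ∈ Metric.ball c r := by rw [← h_img, h]; exact hmem
      rw [Metric.mem_ball, Complex.dist_eq] at hmem'
      have heq : (-(t:ℝ):ℂ)*γ - c = ((-(t+1-r):ℝ):ℂ)*γ := by
        rw [hc]; push_cast; ring
      rw [heq, norm_mul, Complex.norm_real, Real.norm_eq_abs, hγ, mul_one, abs_of_nonpos (by linarith)] at hmem'
      
      linarith
    · intro h
      rw [h_img, hc, hr, h]
      norm_num
end

section
/- For all real t₁ > 0 and t₂ > 0 there exist a positive integer m and a complex number a with |a| < 1 and Im a ≠ 0 such that 1 − |a|² = (t₁/2^m)·|1 − a|² and 1 − |a|² = (t₂/2^m)·|1 + a|². -/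
lemma aux_13 (s₁ s₂ : ℝ) (hs₁ : 0 < s₁) (hs₂ : 0 < s₂) (hss : s₁ * s₂ < 1) :
    ∃ a : ℂ, ‖a‖ < 1 ∧ a.im ≠ 0 ∧
      1 - ‖a‖ ^ 2 = s₁ * ‖1 - a‖ ^ 2 ∧
      1 - ‖a‖ ^ 2 = s₂ * ‖1 + a‖ ^ 2 := by
  have hq : 0 < s₁ / s₂ - s₁ ^ 2 := by
    have key : s₁ / s₂ - s₁ ^ 2 = s₁ * (1 - s₁ * s₂) / s₂ := by
      field_simp
    rw [key]
    exact div_pos (mul_pos hs₁ (by linarith)) hs₂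
  obtain ⟨v, hv, hv2⟩ : ∃ v : ℝ, 0 < v ∧ v ^ 2 = s₁ / s₂ - s₁ ^ 2 :=
    ⟨Real.sqrt (s₁ / s₂ - s₁ ^ 2), Real.sqrt_pos.2 hq, Real.sq_sqrt hq.le⟩
  obtain ⟨D, hDdef, hD⟩ : ∃ D : ℝ, D = (s₁ + 1) ^ 2 + v ^ 2 ∧ 0 < D :=
    ⟨_, rfl, by positivity⟩
  have habs : ∀ z : ℂ, ‖z‖ ^ 2 = z.re ^ 2 + z.im ^ 2 := by
    intro z; rw [Complex.sq_norm, Complex.normSq_apply]; ring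
  refine ⟨⟨(s₁ ^ 2 + v ^ 2 - 1) / D, 2 * v / D⟩, ?_, ?_, ?_, ?_⟩
  · have h1 : ‖(⟨(s₁ ^ 2 + v ^ 2 - 1) / D, 2 * v / D⟩ : ℂ)‖ ^ 2 < 1 := by
      rw [habs]
      simp only
      rw [div_pow, div_pow, ← add_div, div_lt_one (by positivity)]
      nlinarith [hv2, hD, hs₁, sq_nonneg v, sq_nonneg (s₁ + 1), hDdef]
    have h0 := norm_nonneg (⟨(s₁ ^ 2 + v ^ 2 - 1) / D, 2 * v / D⟩ : ℂ)
    nlinarith [h1, h0]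
  · simp only
    exact ne_of_gt (div_pos (by linarith) hD)
  · rw [habs, habs]
    simp only [Complex.sub_re, Complex.sub_im, Complex.one_re, Complex.one_im]
    subst hDdef
    field_simp
    ring
  · rw [habs, habs]
    simp only [Complex.add_re, Complex.add_im, Complex.one_re, Complex.one_im]
    subst hDdef
    have hs₂' : s₂ ≠ 0 := ne_of_gt hs₂
    have hv2' : v ^ 2 * s₂ = s₁ - s₁ ^ 2 * s₂ := by
      field_simp at hv2 ⊢; linarith [hv2]
    field_simp
    nlinarith [hv2', hv2, mul_pos hs₁ hs₂, sq_nonneg v]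

theorem stmt_13 (t₁ t₂ : ℝ) (ht₁ : 0 < t₁) (ht₂ : 0 < t₂) :
    ∃ (m : ℕ), 0 < m ∧ ∃ a : ℂ, ‖a‖ < 1 ∧ a.im ≠ 0 ∧
      1 - ‖a‖ ^ 2 = (t₁ / 2 ^ m) * ‖1 - a‖ ^ 2 ∧
      1 - ‖a‖ ^ 2 = (t₂ / 2 ^ m) * ‖1 + a‖ ^ 2 := by
  obtain ⟨n, hn⟩ := pow_unbounded_of_one_lt (t₁ * t₂) (by norm_num : (1:ℝ) < 4)
  have hm : 0 < n + 1 := Nat.succ_pos n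
  have h4 : t₁ * t₂ < 4 ^ (n + 1) :=
    hn.trans_le (pow_le_pow_right₀ (by norm_num) (Nat.le_succ n))
  have h2m : (0:ℝ) < 2 ^ (n + 1) := by positivity
  have hss : t₁ / 2 ^ (n + 1) * (t₂ / 2 ^ (n + 1)) < 1 := by
    have h44 : (4:ℝ) ^ (n + 1) = 2 ^ (n + 1) * 2 ^ (n + 1) := by
      rw [show (4:ℝ) = 2 * 2 by norm_num, mul_pow]
    rw [div_mul_div_comm, div_lt_one (by positivity), ← h44]
    exact h4
  obtain ⟨a, h1, h2, h3, h5⟩ :=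
    aux_13 (t₁ / 2 ^ (n + 1)) (t₂ / 2 ^ (n + 1))
      (div_pos ht₁ h2m) (div_pos ht₂ h2m) hss
  exact ⟨n + 1, hm, a, h1, h2, h3, h5⟩
end

section
/- Let n ≥ 1, let w₁, …, w_n ∈ ℂ with Re(wₖ) > 0 for each k, and let c₁, …, c_n ∈ ℂ. Then Σ_{i=1}^n Σ_{j=1}^n conj(cᵢ)·c_j/(conj(wᵢ) + w_j) = ∫₀¹ |Σ_{k=1}^n cₖ·exp(wₖ·log t)|² · t^{−1} dt, where the integrand is defined for 0 < t < 1 and the integral is finite. -/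
open MeasureTheory Set Complex intervalIntegral

lemma aux_int_stmt16 {a : ℂ} (ha : 0 < a.re) :
    IntegrableOn (fun t : ℝ => (t : ℂ) ^ (a - 1)) (Ioo 0 1) volume ∧
    ∫ t in Ioo (0:ℝ) 1, (t : ℂ) ^ (a - 1) = 1 / a := by
  have hre : (-1 : ℝ) < (a - 1).re := by
    simp only [Complex.sub_re, Complex.one_re]; linarith
  have hii := intervalIntegrable_cpow' (a := 0) (b := 1) hre
  have hInt : IntegrableOn (fun t : ℝ => (t : ℂ) ^ (a - 1)) (Ioo 0 1) volume := by
    rw [intervalIntegrable_iff_integrableOn_Ioc_of_le zero_le_one] at hii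
    exact ((integrableOn_Ioc_iff_integrableOn_Ioo (hb := enorm_ne_top)).mp hii)
  refine ⟨hInt, ?_⟩
  have hval := integral_cpow (a := 0) (b := 1) (Or.inl hre)
  have ha0 : a ≠ 0 := fun h => by simp [h] at ha
  rw [intervalIntegral.integral_of_le zero_le_one] at hval
  rw [← MeasureTheory.integral_Ioc_eq_integral_Ioo, hval]
  simp [sub_add_cancel, Complex.zero_cpow ha0, Complex.one_cpow]

theorem stmt_16 (n : ℕ) (hn : 1 ≤ n) (w c : Fin n → ℂ) (hw : ∀ k, 0 < (w k).re) :
    IntegrableOn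
      (fun t : ℝ => ‖∑ k, c k * Complex.exp (w k * Real.log t)‖ ^ 2 * t⁻¹)
      (Set.Ioo 0 1) volume ∧
    ∑ i, ∑ j, (starRingEnd ℂ) (c i) * c j / ((starRingEnd ℂ) (w i) + w j) =
      ((∫ t in Set.Ioo (0 : ℝ) 1,
        ‖∑ k, c k * Complex.exp (w k * Real.log t)‖ ^ 2 * t⁻¹ : ℝ) : ℂ) := by
  set f : ℝ → ℂ := fun t => ∑ k, c k * Complex.exp (w k * Real.log t) with hf
  set g : ℝ → ℝ := fun t => ‖f t‖ ^ 2 * t⁻¹ with hg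
  set a : Fin n → Fin n → ℂ := fun i j => (starRingEnd ℂ) (w i) + w j with haij
  have hare : ∀ i j, 0 < (a i j).re := fun i j => by
    simp only [haij, Complex.add_re, Complex.conj_re]
    exact add_pos (hw i) (hw j)
  set F : ℝ → ℂ := fun t => ∑ i, ∑ j, (starRingEnd ℂ) (c i) * c j * (t : ℂ) ^ (a i j - 1) with hF
  have hterm : ∀ i j, IntegrableOn
      (fun t : ℝ => (starRingEnd ℂ) (c i) * c j * (t : ℂ) ^ (a i j - 1)) (Ioo 0 1) volume :=
    fun i j => ((aux_int_stmt16 (hare i j)).1).const_mul _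
  have hFint : IntegrableOn F (Ioo 0 1) volume := by
    apply MeasureTheory.integrable_finset_sum
    intro i _
    exact MeasureTheory.integrable_finset_sum _ (fun j _ => hterm i j)
  have hpt : ∀ t ∈ Ioo (0:ℝ) 1, F t = ((g t : ℝ) : ℂ) := by
    intro t ht
    have ht0 : (0:ℝ) < t := ht.1
    have htne : (t : ℂ) ≠ 0 := Complex.ofReal_ne_zero.mpr ht0.ne'
    have hlog : Complex.log (t : ℂ) = (Real.log t : ℂ) := (Complex.ofReal_log ht0.le).symm
    have hcpow : ∀ z : ℂ, (t : ℂ) ^ z = Complex.exp (z * Real.log t) := by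
      intro z
      rw [Complex.cpow_def_of_ne_zero htne, hlog, mul_comm]
    have hcsub : ∀ i j : Fin n, (t : ℂ) ^ (a i j - 1)
        = Complex.exp ((starRingEnd ℂ) (w i) * Real.log t)
          * Complex.exp (w j * Real.log t) * (t : ℂ)⁻¹ := by
      intro i j
      rw [Complex.cpow_sub _ _ htne, Complex.cpow_one, hcpow, haij, add_mul, Complex.exp_add,
        div_eq_mul_inv]
    have key : F t = (starRingEnd ℂ) (f t) * f t * (t : ℂ)⁻¹ := by
      rw [hF, hf]
      simp only [map_sum]
      rw [Finset.sum_mul_sum, Finset.sum_mul]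
      refine Finset.sum_congr rfl fun i _ => ?_
      rw [Finset.sum_mul]
      refine Finset.sum_congr rfl fun j _ => ?_
      rw [hcsub i j]
      simp only [map_mul, ← Complex.exp_conj, Complex.conj_ofReal]
      ring
    rw [key, ← Complex.normSq_eq_conj_mul_self, ← Complex.sq_norm, hg]
    push_cast
    ring
  have hFg : IntegrableOn (fun t : ℝ => ((g t : ℝ) : ℂ)) (Ioo 0 1) volume :=
    hFint.congr_fun hpt measurableSet_Ioo
  have hgint : IntegrableOn g (Ioo 0 1) volume := by
    refine hFg.re.congr (Filter.Eventually.of_forall fun t => ?_)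
    simp
  refine ⟨hgint, ?_⟩
  have hIF : ∫ t in Ioo (0:ℝ) 1, F t = ((∫ t in Ioo (0:ℝ) 1, g t : ℝ) : ℂ) := by
    rw [MeasureTheory.setIntegral_congr_fun measurableSet_Ioo hpt]
    exact integral_ofReal
  rw [← hIF, hF]
  rw [MeasureTheory.integral_finset_sum _ (fun i _ => MeasureTheory.integrable_finset_sum _
    (fun j _ => hterm i j))]
  refine Finset.sum_congr rfl fun i _ => ?_
  rw [MeasureTheory.integral_finset_sum _ (fun j _ => hterm i j)]
  refine Finset.sum_congr rfl fun j _ => ?_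
  rw [MeasureTheory.integral_const_mul, (aux_int_stmt16 (hare i j)).2, mul_one_div]
end

section
/- Let γ ∈ ℂ with |γ| = 1 and let a ∈ ℂ with Re a > 0. Then for every ε > 0 there exists N such that for all natural numbers n ≥ N and all z ∈ 𝔻, |ρ_{γ, n·a}(z) − γ| < ε; that is, the image disks ρ_{γ,n·a}(𝔻) shrink to the point γ as n → ∞. -/
set_option maxHeartbeats 1600000 in
theorem stmt_17 (γ a : ℂ) (hγ : ‖γ‖ = 1) (ha : 0 < a.re) :
    ∀ ε : ℝ, 0 < ε → ∃ N : ℕ, ∀ n : ℕ, N ≤ n →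
      ∀ z ∈ Metric.ball (0 : ℂ) 1, ‖rho γ ((n : ℂ) * a) z - γ‖ < ε := by
  intro ε hε
  obtain ⟨N, hN⟩ := exists_nat_gt (2 / (ε * a.re))
  refine ⟨N + 1, fun n hn z hz => ?_⟩
  have hz1 : ‖z‖ < 1 := by simpa using hz
  set b : ℂ := (n : ℂ) * a with hb
  clear_value b
  have hbre : b.re = (n : ℝ) * a.re := by simp [hb]
  have hnN : (2 / (ε * a.re) : ℝ) < n := by
    have : (N : ℝ) ≤ n := by exact_mod_cast le_trans (Nat.le_succ N) hn
    linarith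
  have hbre_pos : 0 < b.re := by
    rw [hbre]
    have : (0:ℝ) < n := lt_of_le_of_lt (by positivity) hnN
    positivity
  have hγ0 : γ ≠ 0 := by
    intro h; rw [h] at hγ; simp at hγ
  have hγ1 : γ * (starRingEnd ℂ) γ = 1 := by
    rw [Complex.mul_conj]
    rw [← Complex.sq_norm, hγ]; norm_num
  set v : ℂ := (starRingEnd ℂ) γ * (γ - z) with hv
  clear_value v
  have habsv : ‖v‖ = ‖γ - z‖ := by
    simp [hv, map_mul, hγ]
  have hγz : γ ≠ z := by
    intro h; rw [h] at hγ; exact absurd hγ (ne_of_lt hz1)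
  have hvpos : 0 < ‖v‖ := by
    rw [habsv]
    exact norm_pos_iff.mpr (sub_ne_zero.mpr hγz)
  -- key identity: 2 * v.re - normSq v = 1 - normSq z
  have hγ2 : γ.re ^ 2 + γ.im ^ 2 = 1 := by
    have := Complex.sq_norm γ
    rw [hγ] at this
    simp [Complex.normSq_apply] at this
    nlinarith [this]
  have key : 2 * v.re - Complex.normSq v = 1 - Complex.normSq z := by
    simp only [hv, Complex.normSq_apply, Complex.mul_re, Complex.sub_re, Complex.sub_im,
      Complex.conj_re, Complex.conj_im, Complex.mul_im]
    nlinarith [hγ2]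
  have hnsz : Complex.normSq z < 1 := by
    have := Complex.sq_norm z
    nlinarith [Complex.sq_norm z, hz1, norm_nonneg z]
  have hkey' : Complex.normSq v < 2 * v.re := by linarith
  -- lower bound on |2 + b*v|
  have hlow : (1 + b.re) * ‖v‖ < ‖2 + b * v‖ := by
    have h1 : ((2 + b * v) * (starRingEnd ℂ) v).re ≤ ‖2 + b * v‖ * ‖v‖ := by
      calc ((2 + b * v) * (starRingEnd ℂ) v).re ≤ ‖(2 + b * v) * (starRingEnd ℂ) v‖ :=
            Complex.re_le_norm _
        _ = ‖2 + b * v‖ * ‖v‖ := by simp [map_mul]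
    have h2 : ((2 + b * v) * (starRingEnd ℂ) v).re = 2 * v.re + b.re * Complex.normSq v := by
      have : (2 + b * v) * (starRingEnd ℂ) v = 2 * (starRingEnd ℂ) v + b * (Complex.normSq v : ℂ) := by
        rw [← Complex.mul_conj]; ring
      rw [this]
      simp [Complex.add_re, Complex.mul_re, Complex.conj_re, Complex.conj_im]
    have habs2 : ‖v‖ * ‖v‖ = Complex.normSq v := by
      rw [← Complex.sq_norm]; ring
    have h3 : (1 + b.re) * ‖v‖ * ‖v‖ < 2 * v.re + b.re * Complex.normSq v := by
      rw [mul_assoc, habs2]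
      nlinarith [hkey', hbre_pos]
    exact (mul_lt_mul_iff_of_pos_right hvpos).mp (by linarith)
  -- denominator
  set D : ℂ := (2 + b) * γ - b * z with hD
  clear_value D
  have hDeq : D = γ * (2 + b * v) := by
    rw [hD, hv]
    linear_combination (b * z - b * γ) * hγ1
  have habsD : ‖D‖ = ‖2 + b * v‖ := by
    rw [hDeq, norm_mul, hγ, one_mul]
  have h2bvpos : 0 < ‖2 + b * v‖ :=
    lt_trans (mul_pos (by linarith) hvpos) hlow
  have h2bv : (2 + b * v) ≠ 0 := by
    intro h
    rw [h] at h2bvpos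
    simp at h2bvpos
  have hD0 : D ≠ 0 := hDeq ▸ mul_ne_zero hγ0 h2bv
  -- rho - γ
  have hrho : rho γ b z - γ = 2 * γ * (z - γ) / D := by
    rw [rho, hD]
    rw [hD] at hD0
    rw [eq_div_iff hD0, sub_mul, div_mul_cancel₀ _ hD0]
    ring
  have habsrho : ‖rho γ b z - γ‖ = 2 * ‖v‖ / ‖2 + b * v‖ := by
    rw [hrho, ← habsD, norm_div, norm_mul, norm_mul, hγ]
    have : ‖z - γ‖ = ‖v‖ := by
      rw [habsv, ← norm_neg]; congr 1; ring
    rw [this]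
    norm_num
  rw [habsrho]
  have hb1 : 0 < 1 + b.re := by linarith
  have step1 : 2 * ‖v‖ / ‖2 + b * v‖ < 2 / (1 + b.re) := by
    rw [div_lt_div_iff₀ (by positivity) hb1]
    calc 2 * ‖v‖ * (1 + b.re) = 2 * ((1 + b.re) * ‖v‖) := by ring
      _ < 2 * ‖2 + b * v‖ := by linarith [hlow]
  have step2 : 2 / (1 + b.re) < ε := by
    rw [div_lt_iff₀ hb1]
    have h4 : (2:ℝ) < n * (ε * a.re) := (div_lt_iff₀ (by positivity)).mp hnN
    rw [hbre]
    nlinarith [h4, hε, mul_pos hε ha]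
  linarith
end
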